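/- Let X be a real (n−1)×2n matrix and L : NC_n → ℝ with Δ_I(X) = Σ_{σ ∈ E(I)} L_σ for every (n−1)-subset I ⊆ [2n]. Then for every 1 ≤ k < n−1 and all (n−1)-element subsets I = {i_1<⋯<i_{n−1}} and J = {j_1<⋯<j_{n−1}} of [2n]: Σ_{σ ∈ E(I), κ ∈ E(J)} L_σ·L_κ = Σ_{(I′,J′)} (−1)^{a(I′,J′)} Σ_{σ ∈ E(I′), κ ∈ E(J′)} L_σ·L_κ, where (I′,J′) ranges over all pairs of lists obtained by choosing k positions of I and exchanging the entries of I in those positions with the first k entries j_1,…,j_k of J (keeping all entries in their original positions), a(I′,J′) is the total number of adjacent transpositions needed to sort the two resulting lists into increasing order, and E(K) is taken to be empty whenever the list K has a repeated entry. -/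

import Mathlib

open Finset

noncomputable section
open scoped Classical

/-- The cyclic (clockwise) half-open interval `(a, b]` in `Fin m`. -/
def cIoc {m : ℕ} (a b : Fin m) : Finset (Fin m) :=
  univ.filter fun k => if a < b then a < k ∧ k ≤ b else a < k ∨ k ≤ b

/-- The open cyclic (clockwise) arc from `a` to `b` in `Fin m`, excluding both endpoints. -/
def cIoo {m : ℕ} (a b : Fin m) : Finset (Fin m) :=
  univ.filter fun k => if a < b then a < k ∧ k < b else (a < k ∨ k < b) ∧ k ≠ a ∧ k ≠ b

/-- Set partitions of `[n] = Fin n`. -/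
abbrev NCP (n : ℕ) := Finpartition (univ : Finset (Fin n))

/-- `a` and `b` lie in the same block of `σ`. -/
def sameBlock {n : ℕ} (σ : NCP n) (a b : Fin n) : Prop :=
  ∃ B ∈ σ.parts, a ∈ B ∧ b ∈ B

/-- `σ` is a noncrossing partition: there are no `a < b < c < d` with `a, c` in one
block and `b, d` in a different block. -/
def IsNoncrossing {n : ℕ} (σ : NCP n) : Prop :=
  ∀ a b c d : Fin n, a < b → b < c → c < d →
    sameBlock σ a c → sameBlock σ b d → sameBlock σ a b

/-- The relation defining the dual (Kreweras complement) partition: `ĩ ~ j̃` iff no block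
of `σ` meets both cyclic intervals `{(i+1), …, j}` and `{(j+1), …, i}`. -/
def dualRel {n : ℕ} (σ : NCP n) (i j : Fin n) : Prop :=
  i = j ∨ ¬ ∃ B ∈ σ.parts, (B ∩ cIoc i j).Nonempty ∧ (B ∩ cIoc j i).Nonempty

/-- The point `ī` of `[2n]` (0-based: `ī = 2i`). -/
def bar {n : ℕ} (i : Fin n) : Fin (2*n) := ⟨2*(i:ℕ), by have := i.isLt; omega⟩

/-- The point `ĩ` of `[2n]` (0-based: `ĩ = 2i+1`). -/
def til {n : ℕ} (i : Fin n) : Fin (2*n) := ⟨2*(i:ℕ)+1, by have := i.isLt; omega⟩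

/-- A matching (fixed-point-free involution) of `Fin m`. -/
def IsMatching {m : ℕ} (τ : Fin m → Fin m) : Prop :=
  Function.Involutive τ ∧ ∀ i, τ i ≠ i

/-- A noncrossing matching: there are no `a < b < c < d` with `τ a = c` and `τ b = d`. -/
def IsNCMatching {m : ℕ} (τ : Fin m → Fin m) : Prop :=
  ¬ ∃ a b c d : Fin m, a < b ∧ b < c ∧ c < d ∧ τ a = c ∧ τ b = d

/-- `j` is the cyclic predecessor of `i` in the block of `σ` containing `i`
(`j = i` when `i` is a singleton). -/
def cyclicPred {n : ℕ} (σ : NCP n) (j i : Fin n) : Prop :=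
  ∃ B ∈ σ.parts, i ∈ B ∧ j ∈ B ∧ ∀ x ∈ B, x ∉ cIoo j i

/-- `m` is the medial pairing of `σ`: it pairs `ī` (0-based `2i`) with `j̃` (0-based `2j+1`),
where `j` is the cyclic predecessor of `i` in its block. -/
def IsMedialOf {n : ℕ} (σ : NCP n) (m : Fin (2*n) → Fin (2*n)) : Prop :=
  ∀ i j : Fin n, m (bar i) = til j ↔ cyclicPred σ j i

/-- The crossing number of a matching: the number of pairs `{a,b}` with
`a < b < τ a < τ b`. -/
def crossNum {m : ℕ} (τ : Fin m → Fin m) : ℕ :=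
  ((univ : Finset (Fin m × Fin m)).filter fun p =>
    p.1 < p.2 ∧ p.2 < τ p.1 ∧ τ p.1 < τ p.2).card

/-- `a`, `b`, `c`, `d` are distinct and in cyclic order on `Fin m`. -/
def CyclicOrder4 {m : ℕ} (a b c d : Fin m) : Prop :=
  (a < b ∧ b < c ∧ c < d) ∨ (b < c ∧ c < d ∧ d < a) ∨
  (c < d ∧ d < a ∧ a < b) ∨ (d < a ∧ a < b ∧ b < c)

/-- `τ` covers `τ'` in the uncrossing order. -/
def UncrossCover {m : ℕ} (τ' τ : Fin m → Fin m) : Prop :=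
  IsMatching τ' ∧ IsMatching τ ∧
  ∃ a b c d : Fin m, CyclicOrder4 a b c d ∧ τ a = c ∧ τ b = d ∧
    (∀ x, x ≠ a → x ≠ b → x ≠ c → x ≠ d → τ' x = τ x) ∧
    ((τ' a = d ∧ τ' b = c ∧ ∀ x ∈ cIoo a b, τ x ∉ cIoo c d) ∨
     (τ' a = b ∧ τ' c = d ∧ ∀ x ∈ cIoo b c, τ x ∉ cIoo d a))

/-- The uncrossing partial order on matchings: reflexive-transitive closure of covers. -/
def uncrossLE {m : ℕ} (τ' τ : Fin m → Fin m) : Prop :=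
  Relation.ReflTransGen UncrossCover τ' τ

/-- An affine permutation of period `m`. -/
def IsAffinePerm (m : ℕ) (f : ℤ → ℤ) : Prop :=
  Function.Bijective f ∧ ∀ i : ℤ, f (i + m) = f i + m

/-- The length of an affine permutation of period `m`:
`#{(i,j) : 1 ≤ i ≤ m, i < j, f i > f j}`. -/
def affLen (m : ℕ) (f : ℤ → ℤ) : ℕ :=
  Set.ncard {p : ℤ × ℤ | 1 ≤ p.1 ∧ p.1 ≤ (m:ℤ) ∧ p.1 < p.2 ∧ f p.2 < f p.1}

/-- The affine rank matrix `r_f(i,j) = #{a ≤ i : f a ≥ j}`. -/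
def rankMat (f : ℤ → ℤ) (i j : ℤ) : ℕ :=
  Set.ncard {a : ℤ | a ≤ i ∧ j ≤ f a}

/-- Affine Bruhat order via rank matrices. -/
def bruhatLE (f g : ℤ → ℤ) : Prop := ∀ i j : ℤ, rankMat f i j ≤ rankMat g i j

/-- The sum `Σ_{i=1}^m (f i − i)`. -/
def windowSum (m : ℕ) (f : ℤ → ℤ) : ℤ :=
  ∑ i ∈ Finset.range m, (f ((i:ℤ)+1) - ((i:ℤ)+1))

/-- The affine permutation `g_τ` associated to a matching `τ` of `[2n]`:
on `[2n]`, `g_τ i = τ i` if `τ i > i` and `g_τ i = τ i + 2n` if `τ i < i`,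
extended periodically. -/
def gTau (n : ℕ) (τ : Fin (2*n) → Fin (2*n)) (i : ℤ) : ℤ :=
  if h : (i % ((2*n : ℕ) : ℤ)).toNat < 2*n then
    let r : Fin (2*n) := ⟨(i % ((2*n : ℕ) : ℤ)).toNat, h⟩
    (i - i % ((2*n : ℕ) : ℤ)) +
      (if r < τ r then ((τ r : ℕ) : ℤ) else ((τ r : ℕ) : ℤ) + 2*n)
  else i

/-- `f_τ = g_τ − 1`. -/
def fTau (n : ℕ) (τ : Fin (2*n) → Fin (2*n)) (i : ℤ) : ℤ := gTau n τ i - 1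

/-- An electrical affine permutation for `n`. -/
def IsElectrical (n : ℕ) (f : ℤ → ℤ) : Prop :=
  IsAffinePerm (2*n) f ∧
  (∀ i : ℤ, i ≤ f i ∧ f i ≤ i + 2*n - 2) ∧
  windowSum (2*n) f = ((n:ℤ) - 1) * (2*n) ∧
  ∀ i : ℤ, (f (f i + 1) - (i - 1)) % ((2*n : ℕ) : ℤ) = 0

/-- The Grassmann necklace subset `I_a(f) ⊆ [m]`: representatives in `[m]` (0-based) of
`{f b mod m : b < a and f b ≥ a}`. -/
def necklaceI (m : ℕ) (f : ℤ → ℤ) (a : ℤ) : Finset (Fin m) :=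
  univ.filter fun x => ∃ b : ℤ, b < a ∧ a ≤ f b ∧ f b % (m:ℤ) = ((x:ℕ):ℤ)

/-- The dual necklace subset `J_a(f) ⊆ [m]`: representatives in `[m]` (0-based) of
`{b mod m : b < a and f b ≥ a}`. -/
def necklaceJ (m : ℕ) (f : ℤ → ℤ) (a : ℤ) : Finset (Fin m) :=
  univ.filter fun x => ∃ b : ℤ, b < a ∧ a ≤ f b ∧ b % (m:ℤ) = ((x:ℕ):ℤ)

/-- Dominance order on `k`-element subsets of `Fin m`:
the `r`-th smallest element of `I` is at most the `r`-th smallest element of `J`. -/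
def domLE {m : ℕ} (k : ℕ) (I J : Finset (Fin m)) : Prop :=
  ∃ (hI : I.card = k) (hJ : J.card = k),
    ∀ r : Fin k, I.orderEmbOfFin hI r ≤ J.orderEmbOfFin hJ r

/-- `a`-shifted dominance order: rotate so that `a` becomes least, then compare. -/
def sdomLE {m : ℕ} (k : ℕ) (a : Fin m) (I J : Finset (Fin m)) : Prop :=
  domLE k (I.image (· - a)) (J.image (· - a))

/-- `a`-shifted lexicographic order on subsets of `Fin m`. -/
def lexLE {m : ℕ} (a : Fin m) (I J : Finset (Fin m)) : Prop :=
  I = J ∨ List.Lex (· < ·) ((I.image (· - a)).sort (· ≤ ·)) ((J.image (· - a)).sort (· ≤ ·))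

/-- A Catalan subset of `[2n]` (0-based): an `(n−1)`-subset such that the length-`2n`
word with `U` at positions `{0} ∪ {x+1 : x ∈ I}` and `D` elsewhere is a Dyck path. -/
def IsCatalan {n : ℕ} (I : Finset (Fin (2*n))) : Prop :=
  I.card = n - 1 ∧
  ∀ p : ℕ, p ≤ 2*n →
    p ≤ 2 * ((insert 0 (I.image fun x => (x:ℕ)+1)).filter (· < p)).card

/-- Catalan subset with respect to the shifted order `≤_a`. -/
def IsCatalanAt {n : ℕ} (a : Fin (2*n)) (I : Finset (Fin (2*n))) : Prop :=
  IsCatalan (I.image (· - a))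

/-- The set of maxima of `S` with respect to the `a`-shifted order. -/
def maxAt {m : ℕ} (a : Fin m) (S : Finset (Fin m)) : Finset (Fin m) :=
  S.filter fun x => ∀ y ∈ S, y - a ≤ x - a

/-- `I_a(σ)` for a noncrossing partition `σ`: the complement in `[2n]` of the set of
`≤_a`-maxima of the blocks of `σ` (embedded by `bar`) and of the blocks of the dual
partition `σ̃` (embedded by `til`). -/
def IaP {n : ℕ} (σ : NCP n) (a : Fin (2*n)) : Finset (Fin (2*n)) :=
  univ \ ((σ.parts.biUnion fun B => maxAt a (B.image bar)) ∪
          ((univ : Finset (Fin n)).biUnion fun i =>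
            maxAt a ((univ.filter (dualRel σ i)).image til)))

/-- `I` is concordant with `σ`: `I` has `n−1` elements and every block of `σ` and of
its dual `σ̃` contains exactly one element of `[2n] ∖ I`. -/
def Concordant {n : ℕ} (σ : NCP n) (I : Finset (Fin (2*n))) : Prop :=
  I.card = n - 1 ∧
  (∀ B ∈ σ.parts, ((B.image bar) ∩ (univ \ I)).card = 1) ∧
  (∀ i : Fin n, (((univ.filter (dualRel σ i)).image til) ∩ (univ \ I)).card = 1)

/-- `E(I)`: the set of noncrossing partitions concordant with `I`. -/
def ESet {n : ℕ} (I : Finset (Fin (2*n))) : Set (NCP n) :=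
  {σ | IsNoncrossing σ ∧ Concordant σ I}

/-- The maximal minor `Δ_I(X)` on the columns indexed by `I`, in increasing order. -/
def minorOn {k m : ℕ} (X : Matrix (Fin k) (Fin m) ℝ) (I : Finset (Fin m)) : ℝ :=
  if h : I.card = k then (X.submatrix id fun r => I.orderEmbOfFin h r).det else 0

/-- `X` is totally nonnegative: it has full rank `k` and all maximal minors are `≥ 0`. -/
def IsTNN {k m : ℕ} (X : Matrix (Fin k) (Fin m) ℝ) : Prop :=
  X.rank = k ∧ ∀ I : Finset (Fin m), I.card = k → 0 ≤ minorOn X I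

/-- `t` times the matrix unit `E_{p,q}` (0-based indices). -/
def matE (m : ℕ) (p q : ℕ) (t : ℝ) : Matrix (Fin m) (Fin m) ℝ :=
  Matrix.of fun r s => if (r:ℕ) = p ∧ (s:ℕ) = q then t else 0

/-- `x_i(t) = Id + t·E_{i,i+1}` (1-based index `i`). -/
def xB (m i : ℕ) (t : ℝ) : Matrix (Fin m) (Fin m) ℝ := 1 + matE m (i-1) i t

/-- `y_i(t) = Id + t·E_{i+1,i}` (1-based index `i`). -/
def yB (m i : ℕ) (t : ℝ) : Matrix (Fin m) (Fin m) ℝ := 1 + matE m i (i-1) t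

/-- `u_i(t) = x_i(t)·y_{i−1}(t)` (1-based index `i`). -/
def uB (m i : ℕ) (t : ℝ) : Matrix (Fin m) (Fin m) ℝ := xB m i t * yB m (i-1) t

/-- The columns of `X`, extended `n`-periodically to all integer indices (0-based). -/
def colP {k n : ℕ} (X : Matrix (Fin k) (Fin n) ℝ) (i : ℤ) : Fin k → ℝ :=
  fun r => if h : (i % (n:ℤ)).toNat < n then X r ⟨(i % (n:ℤ)).toNat, h⟩ else 0

/-- `f_X(i) = min { j ≥ i : v_i ∈ span(v_{i+1}, …, v_j) }` (0-based columns). -/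
def fX {k n : ℕ} (X : Matrix (Fin k) (Fin n) ℝ) (i : ℤ) : ℤ :=
  sInf {j : ℤ | i ≤ j ∧ colP X i ∈ Submodule.span ℝ (colP X '' Set.Ioc i j)}

/-- Fintype instance for finite partitions of a finite set. -/
instance {α : Type*} [DecidableEq α] [Fintype α] (s : Finset α) : Fintype (Finpartition s) :=
  Fintype.ofInjective Finpartition.parts fun _ _ h => Finpartition.ext h

/-- The sorted list of (the values of) a subset of `Fin m`. -/
def sortedL {m : ℕ} (I : Finset (Fin m)) : List ℕ :=
  (I.sort (· ≤ ·)).map Fin.val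

/-- The number of inversions of a list (= the number of adjacent transpositions
needed to sort it, when entries are distinct). -/
def invNum (l : List ℕ) : ℕ :=
  ((Finset.range l.length ×ˢ Finset.range l.length).filter fun pq =>
    pq.1 < pq.2 ∧ l.getD pq.2 0 < l.getD pq.1 0).card

/-- The subset of `Fin m` whose values lie in the list `l`. -/
def toFinF {m : ℕ} (l : List ℕ) : Finset (Fin m) :=
  univ.filter fun x => (x:ℕ) ∈ l

/-- The double sum `Σ_{σ ∈ E(l), κ ∈ E(l')} L σ · L κ`, where `E` of a list with a
repeated entry (or an out-of-range entry) is empty. -/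
def pairSum {n : ℕ} (L : NCP n → ℝ) (l l' : List ℕ) : ℝ :=
  if (l.Nodup ∧ ∀ x ∈ l, x < 2*n) ∧ (l'.Nodup ∧ ∀ x ∈ l', x < 2*n) then
    ∑ᶠ σ ∈ ESet (n := n) (toFinF l), ∑ᶠ κ ∈ ESet (n := n) (toFinF l'), L σ * L κ
  else 0

/-- The list obtained from `LI` by replacing its entries at the positions in `S`
(in increasing order of position) by the first `#S` entries of `LJ`. -/
def swapI (LI LJ : List ℕ) (S : Finset ℕ) : List ℕ :=
  (List.range LI.length).map fun p =>
    if p ∈ S then LJ.getD ((S.filter (· < p)).card) 0 else LI.getD p 0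

/-- The list obtained from `LJ` by replacing its first `#S` entries by the entries of
`LI` at the positions in `S`, in increasing order. -/
def swapJ (LI LJ : List ℕ) (S : Finset ℕ) : List ℕ :=
  (List.range LJ.length).map fun p =>
    if p < S.card then LI.getD ((S.sort (· ≤ ·)).getD p 0) 0 else LJ.getD p 0

set_option linter.unusedSectionVars false
set_option linter.unusedVariables false
set_option maxHeartbeats 1000000

namespace Plk

variable {α : Type*} [LinearOrder α]

/-- rank of `x` in `S`: number of elements of `S` below `x`. -/
def rnk (S : Finset α) (x : α) : ℕ := (S.filter (· < x)).card

lemma card_filter_lt_fin {K : ℕ} (i : Fin K) :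
    ((univ : Finset (Fin K)).filter (fun j => j < i)).card = (i : ℕ) := by
  have : ((univ : Finset (Fin K)).filter (fun j => j < i)).image Fin.val = Finset.range i := by
    ext x
    simp only [mem_image, mem_filter, mem_univ, true_and, mem_range]
    constructor
    · rintro ⟨j, hj, rfl⟩; exact hj
    · intro hx; exact ⟨⟨x, lt_trans hx i.2⟩, by simpa [Fin.lt_def] using hx, rfl⟩
  have h2 := congrArg Finset.card this
  rwa [Finset.card_image_of_injective _ Fin.val_injective, Finset.card_range] at h2

lemma rnk_orderEmb {S : Finset α} {K : ℕ} (h : S.card = K) (i : Fin K) :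
    rnk S (S.orderEmbOfFin h i) = (i : ℕ) := by
  have him : S.filter (· < S.orderEmbOfFin h i)
      = ((univ : Finset (Fin K)).filter (fun j => j < i)).image (S.orderEmbOfFin h) := by
    ext y
    simp only [mem_filter, mem_image, mem_univ, true_and]
    constructor
    · rintro ⟨hyS, hy⟩
      have : y ∈ Set.range (S.orderEmbOfFin h) := by
        rw [Finset.range_orderEmbOfFin]; exact hyS
      rcases this with ⟨j, rfl⟩
      exact ⟨j, (S.orderEmbOfFin h).strictMono.lt_iff_lt.1 hy, rfl⟩
    · rintro ⟨j, hj, rfl⟩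
      exact ⟨Finset.orderEmbOfFin_mem S h j, (S.orderEmbOfFin h).strictMono hj⟩
  rw [rnk, him, Finset.card_image_of_injective _ (S.orderEmbOfFin h).injective,
    card_filter_lt_fin]

lemma rnk_lt {S : Finset α} {K : ℕ} (h : S.card = K) {x : α} (hx : x ∈ S) :
    rnk S x < K := by
  have : x ∈ Set.range (S.orderEmbOfFin h) := by rw [Finset.range_orderEmbOfFin]; exact hx
  rcases this with ⟨i, rfl⟩
  rw [rnk_orderEmb h i]; exact i.2

lemma orderEmb_rnk {S : Finset α} {K : ℕ} (h : S.card = K) {x : α} (hx : x ∈ S) :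
    S.orderEmbOfFin h ⟨rnk S x, rnk_lt h hx⟩ = x := by
  have : x ∈ Set.range (S.orderEmbOfFin h) := by rw [Finset.range_orderEmbOfFin]; exact hx
  rcases this with ⟨i, rfl⟩
  congr 1
  ext
  simp [rnk_orderEmb h i]

lemma rnk_strictMonoOn {S : Finset α} {x y : α} (hx : x ∈ S) (hy : y ∈ S) (hxy : x < y) :
    rnk S x < rnk S y := by
  have h : S.card = S.card := rfl
  have hx' : x ∈ Set.range (S.orderEmbOfFin h) := by rw [Finset.range_orderEmbOfFin]; exact hx
  have hy' : y ∈ Set.range (S.orderEmbOfFin h) := by rw [Finset.range_orderEmbOfFin]; exact hy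
  rcases hx' with ⟨i, rfl⟩; rcases hy' with ⟨j, rfl⟩
  rw [rnk_orderEmb h i, rnk_orderEmb h j]
  exact (S.orderEmbOfFin h).strictMono.lt_iff_lt.1 hxy

lemma rnk_injOn {S : Finset α} {x y : α} (hx : x ∈ S) (hy : y ∈ S)
    (hxy : rnk S x = rnk S y) : x = y := by
  rcases lt_trichotomy x y with h | h | h
  · exact absurd hxy (Nat.ne_of_lt (rnk_strictMonoOn hx hy h))
  · exact h
  · exact absurd hxy.symm (Nat.ne_of_lt (rnk_strictMonoOn hy hx h))

/-- `getD` of the sorted list is `orderEmbOfFin`. -/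
lemma sort_getD {S : Finset α} {K : ℕ} (h : S.card = K) (q : ℕ) (hq : q < K) (d : α) :
    (S.sort (· ≤ ·)).getD q d = S.orderEmbOfFin h ⟨q, hq⟩ := by
  rw [Finset.orderEmbOfFin_apply]
  rw [List.getD_eq_getElem?_getD, List.getElem?_eq_getElem (by rw [Finset.length_sort, h]; exact hq)]
  simp

end Plk

namespace Plk

/-- number of inversions of a permutation of `Fin K`. -/
def invP {K : ℕ} (π : Equiv.Perm (Fin K)) : ℕ :=
  (((univ : Finset (Fin K)) ×ˢ (univ : Finset (Fin K))).filter
    fun pq => pq.1 < pq.2 ∧ π pq.2 < π pq.1).card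

lemma sign_eq_signAux {K : ℕ} (π : Equiv.Perm (Fin K)) :
    Equiv.Perm.sign π = Equiv.Perm.signAux π := by
  refine Equiv.Perm.swap_induction_on π ?_ ?_
  · simp [Equiv.Perm.signAux_one]
  · intro f x y hxy ih
    rw [Equiv.Perm.sign_mul, Equiv.Perm.signAux_mul, Equiv.Perm.sign_swap hxy,
      Equiv.Perm.signAux_swap hxy, ih]

lemma sign_eq_neg_one_pow {K : ℕ} (π : Equiv.Perm (Fin K)) :
    Equiv.Perm.sign π = (-1 : ℤˣ) ^ invP π := by
  rw [sign_eq_signAux, Equiv.Perm.signAux]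
  rw [← Finset.prod_filter_mul_prod_filter_not (Equiv.Perm.finPairsLT K)
    (fun x => π x.1 ≤ π x.2)]
  have h2 : ∏ x ∈ (Equiv.Perm.finPairsLT K).filter (fun x => ¬ π x.1 ≤ π x.2),
      (if π x.1 ≤ π x.2 then (-1 : ℤˣ) else 1) = 1 := by
    apply Finset.prod_eq_one
    intro x hx
    rw [if_neg (Finset.mem_filter.1 hx).2]
  have h1 : ∏ x ∈ (Equiv.Perm.finPairsLT K).filter (fun x => π x.1 ≤ π x.2),
      (if π x.1 ≤ π x.2 then (-1 : ℤˣ) else 1)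
      = (-1 : ℤˣ) ^ ((Equiv.Perm.finPairsLT K).filter (fun x => π x.1 ≤ π x.2)).card := by
    rw [Finset.prod_congr rfl (fun x hx => if_pos (Finset.mem_filter.1 hx).2),
      Finset.prod_const]
  rw [h1, h2, mul_one]
  congr 1
  -- card bijection
  apply Finset.card_bij (fun (x : Σ _ : Fin K, Fin K) _ => ((x.2, x.1) : Fin K × Fin K))
  · rintro ⟨a, b⟩ hx
    simp only [Finset.mem_filter, Equiv.Perm.mem_finPairsLT] at hx
    simp only [Finset.mem_filter, Finset.mem_product, Finset.mem_univ, true_and]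
    refine ⟨hx.1, lt_of_le_of_ne hx.2 ?_⟩
    intro h
    exact absurd (π.injective h) (ne_of_gt hx.1)
  · rintro ⟨a, b⟩ ha ⟨c, d⟩ hc h
    simp only [Prod.mk.injEq] at h
    simp [Sigma.ext_iff, h.1, h.2]
  · rintro ⟨p, q⟩ hpq
    simp only [Finset.mem_filter, Finset.mem_product, Finset.mem_univ, true_and] at hpq
    exact ⟨⟨q, p⟩, by simp [Finset.mem_filter, Equiv.Perm.mem_finPairsLT, hpq.1, le_of_lt hpq.2], rfl⟩

lemma sign_cast_eq_neg_one_pow {K : ℕ} (π : Equiv.Perm (Fin K)) :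
    ((Equiv.Perm.sign π : ℤ) : ℝ) = (-1 : ℝ) ^ invP π := by
  rw [sign_eq_neg_one_pow]
  push_cast
  norm_num

end Plk

set_option linter.unusedSectionVars false
namespace Plk


section Exch

def clm (m : ℕ) [NeZero m] (x : ℕ) : Fin m :=
  if h : x < m then ⟨x, h⟩ else ⟨0, Nat.pos_of_ne_zero (NeZero.ne m)⟩

lemma clm_coe (m : ℕ) [NeZero m] {x : ℕ} (hx : x < m) : ((clm m x : Fin m) : ℕ) = x := by
  rw [clm, dif_pos hx]

variable (m k : ℕ) [NeZero m] (w : ℕ → Fin m → ℝ)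

def plugD (S : Finset ℕ) (u : Fin m → Fin m → ℝ) : Fin m → Fin m → ℝ :=
  fun p => if (p : ℕ) ∈ S then w (rnk S (p : ℕ)) else u p

def frontD (S : Finset ℕ) (u : Fin m → Fin m → ℝ) : Fin m → Fin m → ℝ :=
  fun q => if (q : ℕ) < k then u (clm m ((S.sort (· ≤ ·)).getD (q : ℕ) 0)) else w (q : ℕ)

def termD (S : Finset ℕ) (u : Fin m → Fin m → ℝ) : ℝ :=
  Matrix.detRowAlternating (plugD m w S u) * Matrix.detRowAlternating (frontD m k w S u)

def PhiF (u : Fin m → Fin m → ℝ) : ℝ := ∑ S ∈ (range m).powersetCard k, termD m k w S u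

variable {m k}

section SLemmas

variable {S : Finset ℕ}

/-- the `q`-th element of `S` in increasing order (as a natural number). -/
lemma sel_mem (hS2 : S.card = k) {q : ℕ} (hq : q < k) : (S.sort (· ≤ ·)).getD q 0 ∈ S := by
  rw [sort_getD hS2 q hq]; exact Finset.orderEmbOfFin_mem S hS2 _

lemma sel_lt_m (hS1 : S ⊆ range m) (hS2 : S.card = k) {q : ℕ} (hq : q < k) : (S.sort (· ≤ ·)).getD q 0 < m :=
  mem_range.1 (hS1 (sel_mem hS2 hq))

lemma sel_rnk (hS2 : S.card = k) {x : ℕ} (hx : x ∈ S) :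
    (S.sort (· ≤ ·)).getD (rnk S x) 0 = x := by
  rw [sort_getD hS2 _ (rnk_lt hS2 hx)]; exact orderEmb_rnk hS2 hx

lemma rnk_sel (hS2 : S.card = k) {q : ℕ} (hq : q < k) : rnk S ((S.sort (· ≤ ·)).getD q 0) = q := by
  rw [sort_getD hS2 q hq]; exact rnk_orderEmb hS2 _

-- update lemmas
lemma plug_update_off [DecidableEq (Fin m)] {p : Fin m} (hp : (p : ℕ) ∉ S) (u : Fin m → Fin m → ℝ) (x : Fin m → ℝ) :
    plugD m w S (Function.update u p x) = Function.update (plugD m w S u) p x := by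
  funext p'
  rcases eq_or_ne p' p with rfl | hne
  · simp [plugD, hp]
  · simp [plugD, Function.update_of_ne hne]

lemma front_update_off [DecidableEq (Fin m)] (hS1 : S ⊆ range m) (hS2 : S.card = k) {p : Fin m} (hp : (p : ℕ) ∉ S) (u : Fin m → Fin m → ℝ) (x : Fin m → ℝ) :
    frontD m k w S (Function.update u p x) = frontD m k w S u := by
  funext q
  by_cases hq : (q : ℕ) < k
  · have hmem := sel_mem hS2 hq
    have hlt := sel_lt_m hS1 hS2 hq
    have hne : clm m ((S.sort (· ≤ ·)).getD (q : ℕ) 0) ≠ p := by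
      intro h
      apply hp
      rw [← h, clm_coe m hlt]
      exact hmem
    simp only [frontD, if_pos hq]
    exact Function.update_of_ne hne _ _
  · simp [frontD, hq]

lemma plug_update_on [DecidableEq (Fin m)] {p : Fin m} (hp : (p : ℕ) ∈ S) (u : Fin m → Fin m → ℝ) (x : Fin m → ℝ) :
    plugD m w S (Function.update u p x) = plugD m w S u := by
  funext p'
  rcases eq_or_ne p' p with rfl | hne
  · simp [plugD, hp]
  · simp [plugD, Function.update_of_ne hne]

lemma front_update_on [DecidableEq (Fin m)] (hS1 : S ⊆ range m) (hS2 : S.card = k)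
    (hkm : k ≤ m) {p : Fin m} (hp : (p : ℕ) ∈ S) (u : Fin m → Fin m → ℝ) (x : Fin m → ℝ) :
    frontD m k w S (Function.update u p x) =
      Function.update (frontD m k w S u)
        ⟨rnk S (p : ℕ), lt_of_lt_of_le (rnk_lt hS2 hp) hkm⟩ x := by
  funext q
  rcases eq_or_ne (q : ℕ) (rnk S (p : ℕ)) with hq | hq
  · have hqlt : (q : ℕ) < k := by rw [hq]; exact rnk_lt hS2 hp
    have hsel : (S.sort (· ≤ ·)).getD (q : ℕ) 0 = (p : ℕ) := by rw [hq]; exact sel_rnk hS2 hp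
    have hclm : clm m ((S.sort (· ≤ ·)).getD (q : ℕ) 0) = p := by
      apply Fin.ext; rw [hsel]; exact clm_coe m p.isLt
    have hqeq : q = (⟨rnk S (p : ℕ), lt_of_lt_of_le (rnk_lt hS2 hp) hkm⟩ : Fin m) :=
      Fin.ext hq
    simp only [frontD]
    rw [if_pos hqlt, hclm, Function.update_self, hqeq, Function.update_self]
  · have hne : q ≠ (⟨rnk S (p : ℕ), lt_of_lt_of_le (rnk_lt hS2 hp) hkm⟩ : Fin m) := by
      intro h; exact hq (by rw [h])
    simp only [frontD, Function.update_of_ne hne]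
    by_cases hqk : (q : ℕ) < k
    · rw [if_pos hqk, if_pos hqk]
      have hlt := sel_lt_m hS1 hS2 hqk
      have hne2 : clm m ((S.sort (· ≤ ·)).getD (q : ℕ) 0) ≠ p := by
        intro h
        apply hq
        have hsel : (S.sort (· ≤ ·)).getD (q : ℕ) 0 = (p : ℕ) := by rw [← clm_coe m hlt, h]
        have := rnk_sel (S := S) hS2 hqk
        rw [hsel] at this
        rw [← this]
      rw [Function.update_of_ne hne2]
    · rw [if_neg hqk, if_neg hqk]

end SLemmas

/-- The per-`S` term, as a multilinear map in the `m` deleted-column slots. -/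
def phiSM (hkm : k ≤ m) (S : Finset ℕ) (hS : S ∈ (range m).powersetCard k) :
    MultilinearMap ℝ (fun _ : Fin m => (Fin m → ℝ)) ℝ where
  toFun := termD m k w S
  map_update_add' := by
    intro dec u p x y
    have hdec : dec = instDecidableEqFin m := Subsingleton.elim _ _
    subst hdec
    obtain ⟨hS1, hS2⟩ := Finset.mem_powersetCard.1 hS
    show termD m k w S _ = termD m k w S _ + termD m k w S _
    unfold termD
    by_cases hp : (p : ℕ) ∈ S
    · rw [plug_update_on w hp, plug_update_on w hp, plug_update_on w hp,
        front_update_on w hS1 hS2 hkm hp, front_update_on w hS1 hS2 hkm hp,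
        front_update_on w hS1 hS2 hkm hp,
        (Matrix.detRowAlternating (R := ℝ)).map_update_add]
      ring
    · rw [plug_update_off w hp, plug_update_off w hp, plug_update_off w hp,
        front_update_off w hS1 hS2 hp, front_update_off w hS1 hS2 hp,
        front_update_off w hS1 hS2 hp,
        (Matrix.detRowAlternating (R := ℝ)).map_update_add]
      ring
  map_update_smul' := by
    intro dec u p c x
    have hdec : dec = instDecidableEqFin m := Subsingleton.elim _ _
    subst hdec
    obtain ⟨hS1, hS2⟩ := Finset.mem_powersetCard.1 hS
    show termD m k w S _ = c • termD m k w S _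
    unfold termD
    by_cases hp : (p : ℕ) ∈ S
    · rw [plug_update_on w hp, plug_update_on w hp,
        front_update_on w hS1 hS2 hkm hp, front_update_on w hS1 hS2 hkm hp,
        (Matrix.detRowAlternating (R := ℝ)).map_update_smul]
      simp only [smul_eq_mul]; ring
    · rw [plug_update_off w hp, plug_update_off w hp,
        front_update_off w hS1 hS2 hp, front_update_off w hS1 hS2 hp,
        (Matrix.detRowAlternating (R := ℝ)).map_update_smul]
      simp only [smul_eq_mul]; ring

/-- the full sum as a multilinear map -/
def PhiM (hkm : k ≤ m) : MultilinearMap ℝ (fun _ : Fin m => (Fin m → ℝ)) ℝ :=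
  ∑ S ∈ ((range m).powersetCard k).attach, phiSM w hkm S.1 S.2

lemma PhiM_apply (hkm : k ≤ m) (u : Fin m → Fin m → ℝ) :
    PhiM w hkm u = PhiF m k w u := by
  rw [PhiM, MultilinearMap.sum_apply, PhiF]
  exact Finset.sum_attach _ (fun S => termD m k w S u)

end Exch

end Plk

namespace Plk
section Exch2

variable {m k : ℕ} [NeZero m] (w : ℕ → Fin m → ℝ)


/-- swap the membership of `a`,`b` in `S` when exactly one belongs to it -/
def adjSw (a b : Fin m) (S : Finset ℕ) : Finset ℕ :=
  if (a : ℕ) ∈ S ∧ (b : ℕ) ∉ S then insert (b : ℕ) (S.erase (a : ℕ))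
  else if (b : ℕ) ∈ S ∧ (a : ℕ) ∉ S then insert (a : ℕ) (S.erase (b : ℕ))
  else S

lemma adjSw_mem {a b : Fin m} (hab : a ≠ b) {S : Finset ℕ}
    (hS : S ∈ (range m).powersetCard k) : adjSw a b S ∈ (range m).powersetCard k := by
  obtain ⟨hS1, hS2⟩ := Finset.mem_powersetCard.1 hS
  rw [adjSw]
  split_ifs with h1 h2
  · refine Finset.mem_powersetCard.2 ⟨?_, ?_⟩
    · intro z hz
      rcases Finset.mem_insert.1 hz with rfl | hz
      · exact mem_range.2 b.isLt
      · exact hS1 (Finset.erase_subset _ _ hz)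
    · rw [Finset.card_insert_of_notMem (fun hc => h1.2 (Finset.erase_subset _ _ hc)),
        Finset.card_erase_of_mem h1.1, hS2]
      have : 0 < k := hS2 ▸ Finset.card_pos.2 ⟨_, h1.1⟩
      omega
  · refine Finset.mem_powersetCard.2 ⟨?_, ?_⟩
    · intro z hz
      rcases Finset.mem_insert.1 hz with rfl | hz
      · exact mem_range.2 a.isLt
      · exact hS1 (Finset.erase_subset _ _ hz)
    · rw [Finset.card_insert_of_notMem (fun hc => h2.2 (Finset.erase_subset _ _ hc)),
        Finset.card_erase_of_mem h2.1, hS2]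
      have : 0 < k := hS2 ▸ Finset.card_pos.2 ⟨_, h2.1⟩
      omega
  · exact hS

lemma adjSw_invol {a b : Fin m} (hab : a ≠ b) (S : Finset ℕ) :
    adjSw a b (adjSw a b S) = S := by
  have hab' : (a : ℕ) ≠ (b : ℕ) := fun h => hab (Fin.ext h)
  by_cases h1 : (a : ℕ) ∈ S ∧ (b : ℕ) ∉ S
  · have hS' : adjSw a b S = insert (b : ℕ) (S.erase (a : ℕ)) := by rw [adjSw, if_pos h1]
    rw [hS', adjSw]
    have hbm : (b : ℕ) ∈ insert (b : ℕ) (S.erase (a : ℕ)) := Finset.mem_insert_self _ _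
    have ham : (a : ℕ) ∉ insert (b : ℕ) (S.erase (a : ℕ)) := by
      simp [Finset.mem_insert, Finset.mem_erase, hab']
    rw [if_neg (fun hc => ham hc.1), if_pos ⟨hbm, ham⟩,
      Finset.erase_insert (by simp [Finset.mem_erase, h1.2]), Finset.insert_erase h1.1]
  · by_cases h2 : (b : ℕ) ∈ S ∧ (a : ℕ) ∉ S
    · have hS' : adjSw a b S = insert (a : ℕ) (S.erase (b : ℕ)) := by
        rw [adjSw, if_neg h1, if_pos h2]
      rw [hS', adjSw]
      have ham : (a : ℕ) ∈ insert (a : ℕ) (S.erase (b : ℕ)) := Finset.mem_insert_self _ _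
      have hbm : (b : ℕ) ∉ insert (a : ℕ) (S.erase (b : ℕ)) := by
        simp [Finset.mem_insert, Finset.mem_erase, hab'.symm]
      rw [if_pos ⟨ham, hbm⟩, Finset.erase_insert (by simp [Finset.mem_erase, h2.2]),
        Finset.insert_erase h2.1]
    · have hS' : adjSw a b S = S := by rw [adjSw, if_neg h1, if_neg h2]
      rw [hS', adjSw, if_neg h1, if_neg h2]

/-- Case: neither endpoint in `S`. -/
lemma termD_swap_N {S : Finset ℕ} (hS1 : S ⊆ range m) (hS2 : S.card = k)
    {a b : Fin m} (hab : a ≠ b) (ha : (a : ℕ) ∉ S) (hb : (b : ℕ) ∉ S)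
    (u : Fin m → Fin m → ℝ) :
    termD m k w S (u ∘ Equiv.swap a b) = - termD m k w S u := by
  have hplug : plugD m w S (u ∘ Equiv.swap a b) = (plugD m w S u) ∘ Equiv.swap a b := by
    funext x
    rcases eq_or_ne x a with rfl | hxa
    · simp only [Function.comp_apply, Equiv.swap_apply_left, plugD, if_neg ha, if_neg hb]
    · rcases eq_or_ne x b with rfl | hxb
      · simp only [Function.comp_apply, Equiv.swap_apply_right, plugD, if_neg ha, if_neg hb]
      · simp only [Function.comp_apply, Equiv.swap_apply_of_ne_of_ne hxa hxb, plugD]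
  have hfront : frontD m k w S (u ∘ Equiv.swap a b) = frontD m k w S u := by
    funext q
    by_cases hq : (q : ℕ) < k
    · simp only [frontD, if_pos hq, Function.comp_apply]
      have hmem := sel_mem hS2 hq
      have hlt := sel_lt_m hS1 hS2 hq
      have hne1 : clm m ((S.sort (· ≤ ·)).getD (q : ℕ) 0) ≠ a := by
        intro hc; apply ha; rw [← hc, clm_coe m hlt]; exact hmem
      have hne2 : clm m ((S.sort (· ≤ ·)).getD (q : ℕ) 0) ≠ b := by
        intro hc; apply hb; rw [← hc, clm_coe m hlt]; exact hmem
      rw [Equiv.swap_apply_of_ne_of_ne hne1 hne2]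
    · simp only [frontD, if_neg hq]
  rw [termD, termD, hplug, hfront,
    AlternatingMap.map_swap (Matrix.detRowAlternating (R := ℝ)) _ hab, neg_mul]

/-- Case: both endpoints in `S`. -/
lemma termD_swap_B (hkm : k ≤ m) {S : Finset ℕ} (hS1 : S ⊆ range m) (hS2 : S.card = k)
    {a b : Fin m} (hab : a ≠ b) (ha : (a : ℕ) ∈ S) (hb : (b : ℕ) ∈ S)
    (u : Fin m → Fin m → ℝ) :
    termD m k w S (u ∘ Equiv.swap a b) = - termD m k w S u := by
  have hab' : (a : ℕ) ≠ (b : ℕ) := fun h => hab (Fin.ext h)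
  set qa : Fin m := ⟨rnk S (a : ℕ), lt_of_lt_of_le (rnk_lt hS2 ha) hkm⟩ with hqa
  set qb : Fin m := ⟨rnk S (b : ℕ), lt_of_lt_of_le (rnk_lt hS2 hb) hkm⟩ with hqb
  have hqab : qa ≠ qb := by
    intro h
    apply hab'
    apply rnk_injOn ha hb
    simpa [hqa, hqb, Fin.ext_iff] using h
  have hplug : plugD m w S (u ∘ Equiv.swap a b) = plugD m w S u := by
    funext x
    by_cases hx : (x : ℕ) ∈ S
    · simp only [plugD, if_pos hx]
    · have hxa : x ≠ a := fun hc => hx (hc ▸ ha)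
      have hxb : x ≠ b := fun hc => hx (hc ▸ hb)
      simp only [plugD, if_neg hx, Function.comp_apply,
        Equiv.swap_apply_of_ne_of_ne hxa hxb]
  have hfront : frontD m k w S (u ∘ Equiv.swap a b) = (frontD m k w S u) ∘ Equiv.swap qa qb := by
    funext q
    rcases eq_or_ne q qa with rfl | hqa'
    · have h1 : ((qa : Fin m) : ℕ) < k := rnk_lt hS2 ha
      have hsa : (S.sort (· ≤ ·)).getD ((qa : Fin m) : ℕ) 0 = (a : ℕ) := sel_rnk hS2 ha
      have hsb : (S.sort (· ≤ ·)).getD ((qb : Fin m) : ℕ) 0 = (b : ℕ) := sel_rnk hS2 hb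
      have h2 : ((qb : Fin m) : ℕ) < k := rnk_lt hS2 hb
      simp only [frontD, Function.comp_apply, Equiv.swap_apply_left, if_pos h1, if_pos h2]
      rw [hsa, hsb]
      have hca : clm m (a : ℕ) = a := Fin.ext (clm_coe m a.isLt)
      have hcb : clm m (b : ℕ) = b := Fin.ext (clm_coe m b.isLt)
      rw [hca, hcb, Equiv.swap_apply_left]
    · rcases eq_or_ne q qb with rfl | hqb'
      · have h1 : ((qb : Fin m) : ℕ) < k := rnk_lt hS2 hb
        have hsa : (S.sort (· ≤ ·)).getD ((qa : Fin m) : ℕ) 0 = (a : ℕ) := sel_rnk hS2 ha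
        have hsb : (S.sort (· ≤ ·)).getD ((qb : Fin m) : ℕ) 0 = (b : ℕ) := sel_rnk hS2 hb
        have h2 : ((qa : Fin m) : ℕ) < k := rnk_lt hS2 ha
        simp only [frontD, Function.comp_apply, Equiv.swap_apply_right, if_pos h1, if_pos h2]
        rw [hsa, hsb]
        have hca : clm m (a : ℕ) = a := Fin.ext (clm_coe m a.isLt)
        have hcb : clm m (b : ℕ) = b := Fin.ext (clm_coe m b.isLt)
        rw [hca, hcb, Equiv.swap_apply_right]
      · simp only [Function.comp_apply, Equiv.swap_apply_of_ne_of_ne hqa' hqb']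
        by_cases hq : (q : ℕ) < k
        · simp only [frontD, if_pos hq, Function.comp_apply]
          have hmem := sel_mem hS2 hq
          have hlt := sel_lt_m hS1 hS2 hq
          have hne1 : clm m ((S.sort (· ≤ ·)).getD (q : ℕ) 0) ≠ a := by
            intro hc
            apply hqa'
            apply Fin.ext
            have hx : (S.sort (· ≤ ·)).getD (q : ℕ) 0 = (a : ℕ) := by rw [← clm_coe m hlt, hc]
            have h2 := rnk_sel (S := S) hS2 hq
            rw [hx] at h2
            simp [hqa, ← h2]
          have hne2 : clm m ((S.sort (· ≤ ·)).getD (q : ℕ) 0) ≠ b := by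
            intro hc
            apply hqb'
            apply Fin.ext
            have hx : (S.sort (· ≤ ·)).getD (q : ℕ) 0 = (b : ℕ) := by rw [← clm_coe m hlt, hc]
            have h2 := rnk_sel (S := S) hS2 hq
            rw [hx] at h2
            simp [hqb, ← h2]
          rw [Equiv.swap_apply_of_ne_of_ne hne1 hne2]
        · simp only [frontD, if_neg hq]
  rw [termD, termD, hplug, hfront,
    AlternatingMap.map_swap (Matrix.detRowAlternating (R := ℝ)) _ hqab]
  ring

/-- Case: `a ∈ S`, `b = a+1 ∉ S`. -/
lemma termD_swap_A (hkm : k ≤ m) {S : Finset ℕ} (hS1 : S ⊆ range m) (hS2 : S.card = k)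
    {a b : Fin m} (hab : (b : ℕ) = (a : ℕ) + 1) (ha : (a : ℕ) ∈ S) (hb : (b : ℕ) ∉ S)
    (u : Fin m → Fin m → ℝ) :
    termD m k w S (u ∘ Equiv.swap a b) =
      - termD m k w (insert (b : ℕ) (S.erase (a : ℕ))) u := by
  have habne : a ≠ b := fun h => by rw [h] at hab; omega
  have hab' : (a : ℕ) ≠ (b : ℕ) := fun h => habne (Fin.ext h)
  set S' : Finset ℕ := insert (b : ℕ) (S.erase (a : ℕ)) with hS'def
  have hS'1 : S' ⊆ range m := by
    intro z hz
    rcases Finset.mem_insert.1 hz with rfl | hz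
    · exact mem_range.2 b.isLt
    · exact hS1 (Finset.erase_subset _ _ hz)
  have hS'2 : S'.card = k := by
    rw [hS'def, Finset.card_insert_of_notMem (fun hc => hb (Finset.erase_subset _ _ hc)),
      Finset.card_erase_of_mem ha, hS2]
    have : 0 < k := hS2 ▸ Finset.card_pos.2 ⟨_, ha⟩
    omega
  have haS' : (a : ℕ) ∉ S' := by simp [hS'def, Finset.mem_insert, Finset.mem_erase, hab']
  have hbS' : (b : ℕ) ∈ S' := Finset.mem_insert_self _ _
  have hmemS' : ∀ z, z ∈ S' ↔ (z = (b : ℕ) ∨ (z ∈ S ∧ z ≠ (a : ℕ))) := by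
    intro z; simp [hS'def, Finset.mem_insert, Finset.mem_erase, and_comm]
  -- (β) : rnk S' b = rnk S a
  have hbeta : rnk S' (b : ℕ) = rnk S (a : ℕ) := by
    unfold rnk
    congr 1
    ext z
    simp only [Finset.mem_filter, hmemS' z]
    constructor
    · rintro ⟨rfl | ⟨hzS, hza⟩, hlt⟩
      · omega
      · exact ⟨hzS, by omega⟩
    · rintro ⟨hzS, hlt⟩
      exact ⟨Or.inr ⟨hzS, by omega⟩, by omega⟩
  -- (α) : ranks agree away from a,b
  have halpha : ∀ z ∈ S, z ≠ (a : ℕ) → rnk S' z = rnk S z := by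
    intro p hp hpa
    have hpb : p ≠ (b : ℕ) := fun hc => hb (hc ▸ hp)
    unfold rnk
    rcases lt_or_gt_of_ne hpa with hlt | hgt
    · congr 1
      ext z
      simp only [Finset.mem_filter, hmemS' z]
      constructor
      · rintro ⟨rfl | ⟨hzS, hza⟩, h⟩
        · omega
        · exact ⟨hzS, h⟩
      · rintro ⟨hzS, h⟩
        refine ⟨Or.inr ⟨hzS, by omega⟩, h⟩
    · -- p > a, p ≠ b, so p > b
      have hpb' : p > (b : ℕ) := by
        rcases Nat.lt_or_ge (b : ℕ) p with h | h
        · exact h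
        · exfalso; omega
      have hset : S'.filter (· < p) = insert (b : ℕ) ((S.filter (· < p)).erase (a : ℕ)) := by
        ext z
        simp only [Finset.mem_filter, Finset.mem_insert, Finset.mem_erase, hmemS' z]
        constructor
        · rintro ⟨rfl | ⟨hzS, hza⟩, h⟩
          · exact Or.inl rfl
          · exact Or.inr ⟨hza, hzS, h⟩
        · rintro (rfl | ⟨hza, hzS, h⟩)
          · exact ⟨Or.inl rfl, by omega⟩
          · exact ⟨Or.inr ⟨hzS, hza⟩, h⟩
      rw [hset, Finset.card_insert_of_notMem (by
          simp only [Finset.mem_erase, Finset.mem_filter]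
          rintro ⟨-, hzS, -⟩
          exact hb hzS),
        Finset.card_erase_of_mem (Finset.mem_filter.2 ⟨ha, by omega⟩)]
      have : 0 < (S.filter (· < p)).card := Finset.card_pos.2 ⟨(a : ℕ), Finset.mem_filter.2 ⟨ha, by omega⟩⟩
      omega
  have hplug : plugD m w S (u ∘ Equiv.swap a b) = (plugD m w S' u) ∘ Equiv.swap a b := by
    funext x
    rcases eq_or_ne x a with rfl | hxa
    · simp only [Function.comp_apply, Equiv.swap_apply_left, plugD, if_pos ha, if_pos hbS',
        hbeta]
    · rcases eq_or_ne x b with rfl | hxb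
      · simp only [Function.comp_apply, Equiv.swap_apply_right, plugD, if_neg hb, if_neg haS']
      · have hxa' : (x : ℕ) ≠ (a : ℕ) := fun h => hxa (Fin.ext h)
        have hxb' : (x : ℕ) ≠ (b : ℕ) := fun h => hxb (Fin.ext h)
        simp only [Function.comp_apply, Equiv.swap_apply_of_ne_of_ne hxa hxb, plugD]
        by_cases hx : (x : ℕ) ∈ S
        · rw [if_pos hx, if_pos (by rw [hmemS']; exact Or.inr ⟨hx, hxa'⟩), halpha _ hx hxa']
        · rw [if_neg hx, if_neg (by rw [hmemS']; rintro (h | ⟨h, -⟩); exact hxb' h; exact hx h)]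
  have hfront : frontD m k w S (u ∘ Equiv.swap a b) = frontD m k w S' u := by
    funext q
    by_cases hq : (q : ℕ) < k
    · simp only [frontD, if_pos hq, Function.comp_apply]
      have hmem := sel_mem hS2 hq
      have hlt := sel_lt_m hS1 hS2 hq
      rcases eq_or_ne ((S.sort (· ≤ ·)).getD (q : ℕ) 0) (a : ℕ) with hsel | hsel
      · -- this slot holds `a`; after the swap it holds `b`, and in `S'` it is `b`.
        have hclm : clm m ((S.sort (· ≤ ·)).getD (q : ℕ) 0) = a := by
          apply Fin.ext; rw [hsel]; exact clm_coe m a.isLt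
        rw [hclm, Equiv.swap_apply_left]
        have hq' : rnk S' (b : ℕ) = (q : ℕ) := by
          rw [hbeta, ← hsel, rnk_sel hS2 hq]
        have : (S'.sort (· ≤ ·)).getD (q : ℕ) 0 = (b : ℕ) := by
          rw [← hq']; exact sel_rnk hS'2 hbS'
        rw [this, show clm m ((b : Fin m) : ℕ) = b from Fin.ext (clm_coe m b.isLt)]
      · -- slot holds an element ≠ a (hence ≠ b); unchanged
        set e := (S.sort (· ≤ ·)).getD (q : ℕ) 0 with he
        have heb : e ≠ (b : ℕ) := fun hc => hb (hc ▸ hmem)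
        have hclm_ne_a : clm m e ≠ a := by
          intro hc; apply hsel
          rw [← hc, clm_coe m hlt]
        have hclm_ne_b : clm m e ≠ b := by
          intro hc; apply heb
          rw [← hc, clm_coe m hlt]
        rw [Equiv.swap_apply_of_ne_of_ne hclm_ne_a hclm_ne_b]
        have heS' : e ∈ S' := by rw [hmemS']; exact Or.inr ⟨hmem, hsel⟩
        have hq' : rnk S' e = (q : ℕ) := by rw [halpha _ hmem hsel, he]; exact rnk_sel hS2 hq
        have : (S'.sort (· ≤ ·)).getD (q : ℕ) 0 = e := by
          rw [← hq']; exact sel_rnk hS'2 heS'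
        rw [this]
    · simp only [frontD, if_neg hq]
  rw [termD, termD, hplug, hfront,
    AlternatingMap.map_swap (Matrix.detRowAlternating (R := ℝ)) _ habne, neg_mul]

lemma termD_swap (hkm : k ≤ m) {S : Finset ℕ} (hS : S ∈ (range m).powersetCard k)
    {a b : Fin m} (hab : (b : ℕ) = (a : ℕ) + 1) (u : Fin m → Fin m → ℝ) :
    termD m k w S (u ∘ Equiv.swap a b) = - termD m k w (adjSw a b S) u := by
  obtain ⟨hS1, hS2⟩ := Finset.mem_powersetCard.1 hS
  have habne : a ≠ b := fun h => by rw [h] at hab; omega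
  have hab' : (a : ℕ) ≠ (b : ℕ) := fun h => habne (Fin.ext h)
  by_cases h1 : (a : ℕ) ∈ S ∧ (b : ℕ) ∉ S
  · rw [adjSw, if_pos h1]
    exact termD_swap_A w hkm hS1 hS2 hab h1.1 h1.2 u
  · by_cases h2 : (b : ℕ) ∈ S ∧ (a : ℕ) ∉ S
    · rw [adjSw, if_neg h1, if_pos h2]
      set S'' : Finset ℕ := insert (a : ℕ) (S.erase (b : ℕ)) with hS''
      have hS''1 : S'' ⊆ range m := by
        intro z hz
        rcases Finset.mem_insert.1 hz with rfl | hz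
        · exact mem_range.2 a.isLt
        · exact hS1 (Finset.erase_subset _ _ hz)
      have hS''2 : S''.card = k := by
        rw [hS'', Finset.card_insert_of_notMem (fun hc => h2.2 (Finset.erase_subset _ _ hc)),
          Finset.card_erase_of_mem h2.1, hS2]
        have : 0 < k := hS2 ▸ Finset.card_pos.2 ⟨_, h2.1⟩
        omega
      have haS'' : (a : ℕ) ∈ S'' := Finset.mem_insert_self _ _
      have hbS'' : (b : ℕ) ∉ S'' := by
        simp [hS'', Finset.mem_insert, Finset.mem_erase, hab'.symm]
      have key := termD_swap_A w hkm hS''1 hS''2 hab haS'' hbS'' (u ∘ Equiv.swap a b)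
      have hcomp : (u ∘ Equiv.swap a b) ∘ Equiv.swap a b = u := by
        funext x; simp [Function.comp_apply, Equiv.swap_apply_self]
      rw [hcomp] at key
      have hback : insert (b : ℕ) (S''.erase (a : ℕ)) = S := by
        rw [hS'', Finset.erase_insert (by simp [Finset.mem_erase, h2.2]),
          Finset.insert_erase h2.1]
      rw [hback] at key
      -- key : termD S'' u = - termD S (u ∘ swap a b)
      linarith [key]
    · rw [adjSw, if_neg h1, if_neg h2]
      rcases Decidable.em ((a : ℕ) ∈ S) with haS | haS
      · have hbS : (b : ℕ) ∈ S := by tauto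
        exact termD_swap_B w hkm hS1 hS2 habne haS hbS u
      · have hbS : (b : ℕ) ∉ S := by tauto
        exact termD_swap_N w hS1 hS2 habne haS hbS u

lemma PhiF_swap (hkm : k ≤ m) {a b : Fin m} (hab : (b : ℕ) = (a : ℕ) + 1)
    (u : Fin m → Fin m → ℝ) :
    PhiF m k w (u ∘ Equiv.swap a b) = - PhiF m k w u := by
  have habne : a ≠ b := fun h => by rw [h] at hab; omega
  rw [PhiF, PhiF, ← Finset.sum_neg_distrib]
  exact Finset.sum_nbij' (i := fun S => adjSw a b S) (j := fun S => adjSw a b S)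
    (fun S hS => adjSw_mem habne hS) (fun S hS => adjSw_mem habne hS)
    (fun S _ => adjSw_invol habne S) (fun S _ => adjSw_invol habne S)
    (fun S hS => by rw [termD_swap w hkm hS hab u])

lemma PhiF_zero_aux (hkm : k ≤ m) :
    ∀ (d : ℕ) (u : Fin m → Fin m → ℝ) (a b : Fin m), (a : ℕ) < (b : ℕ) →
      (b : ℕ) - (a : ℕ) = d → u a = u b → PhiF m k w u = 0 := by
  intro d
  induction d using Nat.strong_induction_on with
  | _ d ih =>
    intro u a b hab hd heq
    rcases eq_or_lt_of_le (Nat.succ_le_of_lt hab) with h | h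
    · -- b = a + 1
      have hadj : (b : ℕ) = (a : ℕ) + 1 := h.symm
      have habne : a ≠ b := fun hc => by rw [hc] at hadj; omega
      have hswap : u ∘ Equiv.swap a b = u := by
        funext x
        rcases eq_or_ne x a with rfl | hxa
        · simp [Equiv.swap_apply_left, heq]
        · rcases eq_or_ne x b with rfl | hxb
          · simp [Equiv.swap_apply_right, heq]
          · simp [Equiv.swap_apply_of_ne_of_ne hxa hxb]
      have := PhiF_swap w hkm hadj u
      rw [hswap] at this
      linarith
    · -- a + 1 < b
      have hb1 : (b : ℕ) - 1 < m := by omega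
      set c : Fin m := ⟨(b : ℕ) - 1, hb1⟩ with hc
      have hcb : (b : ℕ) = (c : ℕ) + 1 := by simp [hc]; omega
      have h1 := PhiF_swap w hkm hcb u
      have hac : (a : ℕ) < (c : ℕ) := by simp [hc]; omega
      have hane : a ≠ c := fun hx => by rw [hx] at hac; omega
      have hbne : a ≠ b := fun hx => by rw [hx] at hab; omega
      have h2 : PhiF m k w (u ∘ Equiv.swap c b) = 0 := by
        apply ih ((c : ℕ) - (a : ℕ)) (by omega) (u ∘ Equiv.swap c b) a c hac rfl
        have hcbne : c ≠ b := fun hx => by rw [hx] at hcb; omega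
        simp only [Function.comp_apply, Equiv.swap_apply_left,
          Equiv.swap_apply_of_ne_of_ne hane hbne]
        exact heq
      rw [h2] at h1
      linarith

lemma PhiF_zero (hkm : k ≤ m) (u : Fin m → Fin m → ℝ) (a b : Fin m)
    (hne : a ≠ b) (heq : u a = u b) : PhiF m k w u = 0 := by
  rcases lt_or_gt_of_ne hne with h | h
  · exact PhiF_zero_aux w hkm _ u a b h rfl heq
  · exact PhiF_zero_aux w hkm _ u b a h rfl heq.symm

end Exch2
end Plk

namespace Plk
section Exch3

variable {m k : ℕ} [NeZero m] [NeZero k] (w : ℕ → Fin m → ℝ)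

/-- Φ as an alternating map. -/
def PhiA (hkm : k ≤ m) : (Fin m → ℝ) [⋀^Fin m]→ₗ[ℝ] ℝ :=
  { PhiM w hkm with
    map_eq_zero_of_eq' := fun v i j h hij => by
      have : PhiM w hkm v = 0 := by rw [PhiM_apply]; exact PhiF_zero w hkm v i j hij h
      exact this }

lemma PhiA_apply (hkm : k ≤ m) (u : Fin m → Fin m → ℝ) :
    PhiA w hkm u = PhiF m k w u := PhiM_apply w hkm u

lemma basisRow : (fun p : Fin m => (Pi.basisFun ℝ (Fin m)) p) = (1 : Matrix (Fin m) (Fin m) ℝ) := by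
  funext p r
  simp [Matrix.one_apply, Pi.single_apply, eq_comm]

lemma detR_one : Matrix.detRowAlternating (1 : Matrix (Fin m) (Fin m) ℝ) = 1 := by
  rw [show Matrix.detRowAlternating (1 : Matrix (Fin m) (Fin m) ℝ) = Matrix.det 1 from rfl,
    Matrix.det_one]

/-- the `ψ₂` rows -/
def psi2Row (v : Fin k → Fin m → ℝ) : Fin m → Fin m → ℝ :=
  fun q => if (q : ℕ) < k then v (clm k (q : ℕ)) else w (q : ℕ)

lemma psi2Row_update (hkm : k ≤ m) (v : Fin k → Fin m → ℝ) (j : Fin k) (x : Fin m → ℝ) :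
    psi2Row w (Function.update v j x) =
      Function.update (psi2Row w v) (⟨(j : ℕ), lt_of_lt_of_le j.isLt hkm⟩ : Fin m) x := by
  funext q
  simp only [psi2Row, Function.update_apply]
  by_cases hq : (q : ℕ) < k
  · have hiff : (clm k (q : ℕ) = j) ↔ (q = (⟨(j : ℕ), lt_of_lt_of_le j.isLt hkm⟩ : Fin m)) := by
      constructor
      · intro hc
        apply Fin.ext
        show (q : ℕ) = (j : ℕ)
        rw [← clm_coe k hq, hc]
      · intro hc
        apply Fin.ext
        rw [clm_coe k hq]
        show (q : ℕ) = (j : ℕ)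
        rw [hc]
    rw [if_pos hq, if_pos hq]
    by_cases hc : clm k (q : ℕ) = j
    · rw [if_pos hc, if_pos (hiff.1 hc)]
    · rw [if_neg hc, if_neg (fun hx => hc (hiff.2 hx))]
  · have hne : q ≠ (⟨(j : ℕ), lt_of_lt_of_le j.isLt hkm⟩ : Fin m) := by
      intro hc
      apply hq
      rw [show (q : ℕ) = (j : ℕ) from congrArg Fin.val hc]
      exact j.isLt
    rw [if_neg hq, if_neg hq, if_neg hne]

def psi2M (hkm : k ≤ m) : MultilinearMap ℝ (fun _ : Fin k => (Fin m → ℝ)) ℝ where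
  toFun v := Matrix.detRowAlternating (psi2Row w v)
  map_update_add' := by
    intro dec v j x y
    have hdec : dec = instDecidableEqFin k := Subsingleton.elim _ _
    subst hdec
    rw [psi2Row_update w hkm, psi2Row_update w hkm, psi2Row_update w hkm,
      (Matrix.detRowAlternating (R := ℝ)).map_update_add]
  map_update_smul' := by
    intro dec v j c x
    have hdec : dec = instDecidableEqFin k := Subsingleton.elim _ _
    subst hdec
    rw [psi2Row_update w hkm, psi2Row_update w hkm,
      (Matrix.detRowAlternating (R := ℝ)).map_update_smul]

def psi2A (hkm : k ≤ m) : (Fin m → ℝ) [⋀^Fin k]→ₗ[ℝ] ℝ :=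
  { psi2M w hkm with
    map_eq_zero_of_eq' := by
      intro v i j h hij
      have him : ((⟨(i : ℕ), lt_of_lt_of_le i.isLt hkm⟩ : Fin m)) ≠
          (⟨(j : ℕ), lt_of_lt_of_le j.isLt hkm⟩ : Fin m) := by
        intro hc
        exact hij (Fin.ext (by simpa [Fin.ext_iff] using hc))
      show Matrix.detRowAlternating (psi2Row w v) = 0
      apply AlternatingMap.map_eq_zero_of_eq _ _ _ him
      show psi2Row w v _ = psi2Row w v _
      have h1 : clm k ((⟨(i : ℕ), lt_of_lt_of_le i.isLt hkm⟩ : Fin m) : ℕ) = i :=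
        Fin.ext (clm_coe k i.isLt)
      have h2 : clm k ((⟨(j : ℕ), lt_of_lt_of_le j.isLt hkm⟩ : Fin m) : ℕ) = j :=
        Fin.ext (clm_coe k j.isLt)
      simp only [psi2Row, if_pos i.isLt, if_pos j.isLt, h1, h2, h] }

/-- the `ψ₁` plugged rows: the identity matrix with rows in `S` replaced by `v`. -/
def plugE (S : Finset ℕ) (v : Fin k → Fin m → ℝ) : Fin m → Fin m → ℝ :=
  plugD m (fun t => v (clm k t)) S (1 : Matrix (Fin m) (Fin m) ℝ)

lemma plugE_update {S : Finset ℕ} (hS1 : S ⊆ range m) (hS2 : S.card = k)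
    (v : Fin k → Fin m → ℝ) (j : Fin k) (x : Fin m → ℝ) :
    plugE S (Function.update v j x) =
      Function.update (plugE S v)
        (clm m ((S.sort (· ≤ ·)).getD (j : ℕ) 0)) x := by
  have hjk : (j : ℕ) < k := j.isLt
  have hselmem := sel_mem hS2 hjk
  have hsellt := sel_lt_m hS1 hS2 hjk
  set pj : Fin m := clm m ((S.sort (· ≤ ·)).getD (j : ℕ) 0) with hpj
  have hpjval : ((pj : Fin m) : ℕ) = (S.sort (· ≤ ·)).getD (j : ℕ) 0 := clm_coe m hsellt
  funext p
  rcases eq_or_ne p pj with rfl | hne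
  · have hpS : ((pj : Fin m) : ℕ) ∈ S := by rw [hpjval]; exact hselmem
    have hrnk : rnk S ((pj : Fin m) : ℕ) = (j : ℕ) := by rw [hpjval]; exact rnk_sel hS2 hjk
    have hclm : clm k (rnk S ((pj : Fin m) : ℕ)) = j := by
      rw [hrnk]; exact Fin.ext (clm_coe k hjk)
    simp only [plugE, plugD, if_pos hpS]
    rw [hclm, Function.update_self, Function.update_self]
  · rw [Function.update_of_ne hne]
    by_cases hp : (p : ℕ) ∈ S
    · simp only [plugE, plugD, if_pos hp]
      have hrnklt : rnk S (p : ℕ) < k := rnk_lt hS2 hp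
      have : clm k (rnk S (p : ℕ)) ≠ j := by
        intro hc
        apply hne
        have hr : rnk S (p : ℕ) = (j : ℕ) := by rw [← clm_coe k hrnklt, hc]
        apply Fin.ext
        rw [hpjval]
        have := sel_rnk hS2 hp
        rw [hr] at this
        rw [← this]
      rw [Function.update_of_ne this]
    · simp only [plugE, plugD, if_neg hp]

def cstS (kk : ℕ) (S : Finset ℕ) : ℝ :=
  Matrix.detRowAlternating (frontD m kk w S (1 : Matrix (Fin m) (Fin m) ℝ))

def psi1SM (S : Finset ℕ) (hS : S ∈ (range m).powersetCard k) :
    MultilinearMap ℝ (fun _ : Fin k => (Fin m → ℝ)) ℝ where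
  toFun v := Matrix.detRowAlternating (plugE S v) * cstS w k S
  map_update_add' := by
    intro dec v j x y
    have hdec : dec = instDecidableEqFin k := Subsingleton.elim _ _
    subst hdec
    obtain ⟨hS1, hS2⟩ := Finset.mem_powersetCard.1 hS
    rw [plugE_update hS1 hS2, plugE_update hS1 hS2, plugE_update hS1 hS2,
      (Matrix.detRowAlternating (R := ℝ)).map_update_add]
    ring
  map_update_smul' := by
    intro dec v j c x
    have hdec : dec = instDecidableEqFin k := Subsingleton.elim _ _
    subst hdec
    obtain ⟨hS1, hS2⟩ := Finset.mem_powersetCard.1 hS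
    rw [plugE_update hS1 hS2, plugE_update hS1 hS2,
      (Matrix.detRowAlternating (R := ℝ)).map_update_smul]
    simp only [smul_eq_mul]; ring

def psi1M : MultilinearMap ℝ (fun _ : Fin k => (Fin m → ℝ)) ℝ :=
  ∑ S ∈ ((range m).powersetCard k).attach, psi1SM w S.1 S.2

lemma psi1M_apply (v : Fin k → Fin m → ℝ) :
    psi1M w v = ∑ S ∈ (range m).powersetCard k,
      Matrix.detRowAlternating (plugE S v) * cstS w k S := by
  rw [psi1M, MultilinearMap.sum_apply]
  exact Finset.sum_attach _ (fun S => Matrix.detRowAlternating (plugE S v) * cstS w k S)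

lemma psi1M_zero (v : Fin k → Fin m → ℝ) (i j : Fin k) (hij : i ≠ j) (h : v i = v j) :
    psi1M w v = 0 := by
  rw [psi1M_apply]
  apply Finset.sum_eq_zero
  intro S hS
  obtain ⟨hS1, hS2⟩ := Finset.mem_powersetCard.1 hS
  have hik : (i : ℕ) < k := i.isLt
  have hjk : (j : ℕ) < k := j.isLt
  set pi : Fin m := clm m ((S.sort (· ≤ ·)).getD (i : ℕ) 0) with hpi
  set pj : Fin m := clm m ((S.sort (· ≤ ·)).getD (j : ℕ) 0) with hpj
  have hpivar : ((pi : Fin m) : ℕ) = (S.sort (· ≤ ·)).getD (i : ℕ) 0 := clm_coe m (sel_lt_m hS1 hS2 hik)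
  have hpjvar : ((pj : Fin m) : ℕ) = (S.sort (· ≤ ·)).getD (j : ℕ) 0 := clm_coe m (sel_lt_m hS1 hS2 hjk)
  have hpij : pi ≠ pj := by
    intro hc
    apply hij
    have : (S.sort (· ≤ ·)).getD (i : ℕ) 0 = (S.sort (· ≤ ·)).getD (j : ℕ) 0 := by
      rw [← hpivar, ← hpjvar, hc]
    have h2 : (i : ℕ) = (j : ℕ) := by
      rw [← rnk_sel (S := S) hS2 hik, ← rnk_sel (S := S) hS2 hjk, this]
    exact Fin.ext h2
  have hrowpi : plugE S v pi = v i := by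
    have hpS : ((pi : Fin m) : ℕ) ∈ S := by rw [hpivar]; exact sel_mem hS2 hik
    have hr : rnk S ((pi : Fin m) : ℕ) = (i : ℕ) := by rw [hpivar]; exact rnk_sel hS2 hik
    simp only [plugE, plugD, if_pos hpS, hr]
    rw [show clm k (i : ℕ) = i from Fin.ext (clm_coe k hik)]
  have hrowpj : plugE S v pj = v j := by
    have hpS : ((pj : Fin m) : ℕ) ∈ S := by rw [hpjvar]; exact sel_mem hS2 hjk
    have hr : rnk S ((pj : Fin m) : ℕ) = (j : ℕ) := by rw [hpjvar]; exact rnk_sel hS2 hjk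
    simp only [plugE, plugD, if_pos hpS, hr]
    rw [show clm k (j : ℕ) = j from Fin.ext (clm_coe k hjk)]
  have : Matrix.detRowAlternating (plugE S v) = 0 := by
    apply AlternatingMap.map_eq_zero_of_eq _ _ _ hpij
    rw [hrowpi, hrowpj, h]
  rw [this, zero_mul]

def psi1A : (Fin m → ℝ) [⋀^Fin k]→ₗ[ℝ] ℝ :=
  { psi1M w with
    map_eq_zero_of_eq' := fun v i j h hij => psi1M_zero w v i j hij h }

end Exch3
end Plk

namespace Plk
section Exch4

variable {m k : ℕ} [NeZero m] [NeZero k] (w : ℕ → Fin m → ℝ)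

lemma psi1A_apply (v : Fin k → Fin m → ℝ) :
    psi1A (m := m) w v = ∑ S ∈ (range m).powersetCard k,
      Matrix.detRowAlternating (plugE S v) * cstS w k S := psi1M_apply w v

lemma psi_core (hkm : k ≤ m) (gs : Fin k → Fin m) (S₀ : Finset ℕ)
    (hcard : S₀.card = k) (hsub : S₀ ⊆ range m)
    (hgs : ∀ q : Fin k, ((gs q : Fin m) : ℕ) = S₀.orderEmbOfFin hcard q) :
    psi1A (m := m) w (fun i => (Pi.basisFun ℝ (Fin m)) (gs i)) =
      psi2A w hkm (fun i => (Pi.basisFun ℝ (Fin m)) (gs i)) := by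
  have hrow : ∀ p : Fin m, (Pi.basisFun ℝ (Fin m)) p = (1 : Matrix (Fin m) (Fin m) ℝ) p :=
    fun p => congrFun basisRow p
  set vt : Fin k → Fin m → ℝ := fun i => (Pi.basisFun ℝ (Fin m)) (gs i) with hvt
  have hS₀mem : S₀ ∈ (range m).powersetCard k := Finset.mem_powersetCard.2 ⟨hsub, hcard⟩
  rw [psi1A_apply]
  rw [Finset.sum_eq_single_of_mem S₀ hS₀mem]
  · -- the S₀ term equals the ψ₂ side
    have hplug : plugE S₀ vt = (1 : Matrix (Fin m) (Fin m) ℝ) := by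
      funext p
      by_cases hp : (p : ℕ) ∈ S₀
      · have hrlt : rnk S₀ (p : ℕ) < k := rnk_lt hcard hp
        have hclm : clm k (rnk S₀ (p : ℕ)) = ⟨rnk S₀ (p : ℕ), hrlt⟩ := Fin.ext (clm_coe k hrlt)
        have hgsp : gs ⟨rnk S₀ (p : ℕ), hrlt⟩ = p := by
          apply Fin.ext
          rw [hgs]
          exact orderEmb_rnk hcard hp
        simp only [plugE, plugD, if_pos hp, hclm, hvt, hgsp]
        exact hrow p
      · simp only [plugE, plugD, if_neg hp]
    have hcst : cstS w k S₀ =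
        Matrix.detRowAlternating (psi2Row w vt) := by
      unfold cstS
      congr 1
      funext q
      by_cases hq : (q : ℕ) < k
      · simp only [frontD, psi2Row, if_pos hq]
        have hsellt := sel_lt_m hsub hcard hq
        have hsel : (S₀.sort (· ≤ ·)).getD (q : ℕ) 0 = S₀.orderEmbOfFin hcard ⟨(q : ℕ), hq⟩ :=
          sort_getD hcard _ hq 0
        have hgq : gs (clm k (q : ℕ)) = clm m ((S₀.sort (· ≤ ·)).getD (q : ℕ) 0) := by
          apply Fin.ext
          rw [hgs, clm_coe m hsellt, hsel]
          congr 1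
          exact Fin.ext (clm_coe k hq)
        rw [hvt]
        show (1 : Matrix (Fin m) (Fin m) ℝ) _ = (Pi.basisFun ℝ (Fin m)) (gs (clm k (q : ℕ)))
        rw [hrow, hgq]
      · simp only [frontD, psi2Row, if_neg hq]
    rw [hplug, detR_one, one_mul, hcst]
    rfl
  · -- all other terms vanish
    intro S hS hSne
    obtain ⟨hS1, hS2⟩ := Finset.mem_powersetCard.1 hS
    have hnot : ¬ S₀ ⊆ S := by
      intro hsubs
      exact hSne (Finset.eq_of_subset_of_card_le hsubs (le_of_eq (hS2.trans hcard.symm))).symm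
    obtain ⟨x, hxS₀, hxS⟩ := Finset.not_subset.1 hnot
    set i : Fin k := ⟨rnk S₀ x, rnk_lt hcard hxS₀⟩ with hi
    have hgsi : ((gs i : Fin m) : ℕ) = x := by
      rw [hgs]
      exact orderEmb_rnk hcard hxS₀
    -- two equal rows
    have hik : (i : ℕ) < k := i.isLt
    have hselmem := sel_mem (S := S) hS2 hik
    have hsellt := sel_lt_m (S := S) hS1 hS2 hik
    set p2 : Fin m := clm m ((S.sort (· ≤ ·)).getD (i : ℕ) 0) with hp2
    have hp2val : ((p2 : Fin m) : ℕ) = (S.sort (· ≤ ·)).getD (i : ℕ) 0 := clm_coe m hsellt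
    have hp2S : ((p2 : Fin m) : ℕ) ∈ S := by rw [hp2val]; exact hselmem
    have hne : p2 ≠ gs i := by
      intro hc
      apply hxS
      rw [← hgsi, ← hc]
      exact hp2S
    have hrow1 : plugE S vt (gs i) = (1 : Matrix (Fin m) (Fin m) ℝ) (gs i) := by
      have : ((gs i : Fin m) : ℕ) ∉ S := by rw [hgsi]; exact hxS
      simp only [plugE, plugD, if_neg this]
    have hrow2 : plugE S vt p2 = (1 : Matrix (Fin m) (Fin m) ℝ) (gs i) := by
      have hr : rnk S ((p2 : Fin m) : ℕ) = (i : ℕ) := by rw [hp2val]; exact rnk_sel hS2 hik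
      have hclm : clm k (rnk S ((p2 : Fin m) : ℕ)) = i := by rw [hr]; exact Fin.ext (clm_coe k hik)
      simp only [plugE, plugD, if_pos hp2S, hclm, hvt]
      exact hrow (gs i)
    have hdet : Matrix.detRowAlternating (plugE S vt) = 0 := by
      apply AlternatingMap.map_eq_zero_of_eq _ _ (hrow2.trans hrow1.symm) hne
    rw [hdet, zero_mul]

lemma psi_ext (hkm : k ≤ m) (v : Fin k → Fin m → ℝ) :
    psi1A (m := m) w v = psi2A w hkm v := by
  have hmaps : (psi1A (m := m) (k := k) w).toMultilinearMap =
      (psi2A w hkm).toMultilinearMap := by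
    apply Module.Basis.ext_multilinear (fun _ => Pi.basisFun ℝ (Fin m))
    intro g
    by_cases hg : Function.Injective g
    · set S₀ : Finset ℕ := Finset.image (fun q : Fin k => ((g q : Fin m) : ℕ)) Finset.univ
        with hS₀
      have hinj2 : Function.Injective (fun q : Fin k => ((g q : Fin m) : ℕ)) :=
        fun a b hab => hg (Fin.val_injective hab)
      have hcard : S₀.card = k := by
        rw [hS₀, Finset.card_image_of_injective _ hinj2, Finset.card_univ, Fintype.card_fin]
      have hsub : S₀ ⊆ range m := by
        intro z hz
        rw [hS₀] at hz
        obtain ⟨q, -, rfl⟩ := Finset.mem_image.1 hz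
        exact mem_range.2 (g q).isLt
      have hmem : ∀ q, ((g q : Fin m) : ℕ) ∈ S₀ := fun q => by
        rw [hS₀]; exact Finset.mem_image_of_mem _ (Finset.mem_univ q)
      have hfinj : Function.Injective
          (fun q : Fin k => (⟨rnk S₀ ((g q : Fin m) : ℕ), rnk_lt hcard (hmem q)⟩ : Fin k)) := by
        intro a b hab
        apply hg
        apply Fin.val_injective
        exact rnk_injOn (hmem a) (hmem b) (by simpa [Fin.ext_iff] using hab)
      set π : Equiv.Perm (Fin k) :=
        Equiv.ofBijective _ ((Finite.injective_iff_bijective).1 hfinj) with hπ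
      set gs : Fin k → Fin m := fun q => clm m (S₀.orderEmbOfFin hcard q) with hgsdef
      have hgsval : ∀ q, ((gs q : Fin m) : ℕ) = S₀.orderEmbOfFin hcard q := by
        intro q
        rw [hgsdef]
        exact clm_coe m (mem_range.1 (hsub (Finset.orderEmbOfFin_mem _ _ _)))
      have hcomp : ∀ i, gs (π i) = g i := by
        intro i
        apply Fin.ext
        rw [hgsval]
        have hπi : π i = ⟨rnk S₀ ((g i : Fin m) : ℕ), rnk_lt hcard (hmem i)⟩ := by
          rw [hπ]; rfl
        rw [hπi]
        exact orderEmb_rnk hcard (hmem i)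
      have htuple : (fun i => (Pi.basisFun ℝ (Fin m)) (g i)) =
          (fun i => (Pi.basisFun ℝ (Fin m)) (gs i)) ∘ π := by
        funext i
        simp only [Function.comp_apply, hcomp i]
      show psi1A (m := m) w _ = psi2A w hkm _
      rw [htuple, AlternatingMap.map_perm, AlternatingMap.map_perm,
        psi_core w hkm gs S₀ hcard hsub hgsval]
    · obtain ⟨i, j, hgij, hij⟩ := Function.not_injective_iff.1 hg
      have hv : (Pi.basisFun ℝ (Fin m)) (g i) = (Pi.basisFun ℝ (Fin m)) (g j) := by rw [hgij]
      have h1 : psi1A (m := m) (k := k) w (fun i => (Pi.basisFun ℝ (Fin m)) (g i)) = 0 :=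
        AlternatingMap.map_eq_zero_of_eq _ _ (i := i) (j := j) hv hij
      have h2 : psi2A w hkm (fun i => (Pi.basisFun ℝ (Fin m)) (g i)) = 0 :=
        AlternatingMap.map_eq_zero_of_eq _ _ (i := i) (j := j) hv hij
      show psi1A (m := m) w _ = psi2A w hkm _
      rw [h1, h2]
  exact DFunLike.congr_fun hmaps v

lemma PhiF_one_eq (hkm : k ≤ m) :
    PhiF m k w (1 : Matrix (Fin m) (Fin m) ℝ) =
      Matrix.detRowAlternating (fun q : Fin m => w (q : ℕ)) := by
  have h1 : PhiF m k w (1 : Matrix (Fin m) (Fin m) ℝ) =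
      psi1M w (fun j : Fin k => w (j : ℕ)) := by
    unfold PhiF
    rw [psi1M_apply]
    apply Finset.sum_congr rfl
    intro S hS
    obtain ⟨hS1, hS2⟩ := Finset.mem_powersetCard.1 hS
    unfold termD
    congr 1
    · congr 1
      funext p
      by_cases hp : (p : ℕ) ∈ S
      · have hrlt : rnk S (p : ℕ) < k := rnk_lt hS2 hp
        simp only [plugE, plugD, if_pos hp, clm_coe k hrlt]
      · simp only [plugE, plugD, if_neg hp]
  rw [h1]
  have h2 := psi_ext w hkm (fun j : Fin k => w (j : ℕ))
  have h3 : psi1A (m := m) w (fun j : Fin k => w (j : ℕ)) =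
      psi1M w (fun j : Fin k => w (j : ℕ)) := rfl
  rw [← h3, h2]
  show Matrix.detRowAlternating (psi2Row w fun j : Fin k => w (j : ℕ)) = _
  congr 1
  funext q
  by_cases hq : (q : ℕ) < k
  · simp only [psi2Row, if_pos hq, clm_coe k hq]
  · simp only [psi2Row, if_neg hq]

lemma PhiF_eq (hkm : k ≤ m) (u : Fin m → Fin m → ℝ) :
    PhiF m k w u =
      Matrix.detRowAlternating (fun q : Fin m => w (q : ℕ)) * Matrix.detRowAlternating u := by
  have hmaps : (PhiA w hkm).toMultilinearMap =
      ((Matrix.detRowAlternating (fun q : Fin m => w (q : ℕ))) •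
        (Matrix.detRowAlternating : (Fin m → ℝ) [⋀^Fin m]→ₗ[ℝ] ℝ)).toMultilinearMap := by
    apply Module.Basis.ext_multilinear (fun _ => Pi.basisFun ℝ (Fin m))
    intro g
    by_cases hg : Function.Injective g
    · have hb := (Finite.injective_iff_bijective).1 hg
      set π : Equiv.Perm (Fin m) := Equiv.ofBijective g hb with hπ
      have htuple : (fun i => (Pi.basisFun ℝ (Fin m)) (g i)) =
          (fun p : Fin m => (Pi.basisFun ℝ (Fin m)) p) ∘ π := by
        funext i
        have : π i = g i := by rw [hπ]; rfl
        simp only [Function.comp_apply, this]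
      set GA : (Fin m → ℝ) [⋀^Fin m]→ₗ[ℝ] ℝ :=
        (Matrix.detRowAlternating (fun q : Fin m => w (q : ℕ))) • Matrix.detRowAlternating
        with hGA
      have hcore : PhiA w hkm (fun p : Fin m => (Pi.basisFun ℝ (Fin m)) p) =
          GA (fun p : Fin m => (Pi.basisFun ℝ (Fin m)) p) := by
        rw [PhiA_apply, hGA, AlternatingMap.smul_apply, basisRow, PhiF_one_eq w hkm,
          detR_one, smul_eq_mul, mul_one]
      show PhiA w hkm _ = GA _
      rw [htuple, (PhiA w hkm).map_perm _ π, GA.map_perm _ π, hcore]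
    · obtain ⟨i, j, hgij, hij⟩ := Function.not_injective_iff.1 hg
      have hv : (Pi.basisFun ℝ (Fin m)) (g i) = (Pi.basisFun ℝ (Fin m)) (g j) := by rw [hgij]
      have h1 : PhiA w hkm (fun i => (Pi.basisFun ℝ (Fin m)) (g i)) = 0 :=
        AlternatingMap.map_eq_zero_of_eq _ _ (i := i) (j := j) hv hij
      have h2 : ((Matrix.detRowAlternating (fun q : Fin m => w (q : ℕ))) •
          (Matrix.detRowAlternating : (Fin m → ℝ) [⋀^Fin m]→ₗ[ℝ] ℝ))
          (fun i => (Pi.basisFun ℝ (Fin m)) (g i)) = 0 :=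
        AlternatingMap.map_eq_zero_of_eq _ _ (i := i) (j := j) hv hij
      show PhiA w hkm _ = _
      rw [h1]
      exact h2.symm
  have := DFunLike.congr_fun hmaps u
  rw [show (PhiA w hkm).toMultilinearMap u = PhiF m k w u from PhiA_apply w hkm u] at this
  rw [this]
  rw [show ((Matrix.detRowAlternating (fun q : Fin m => w (q : ℕ))) •
      (Matrix.detRowAlternating : (Fin m → ℝ) [⋀^Fin m]→ₗ[ℝ] ℝ)).toMultilinearMap u =
      (Matrix.detRowAlternating (fun q : Fin m => w (q : ℕ))) •
        Matrix.detRowAlternating u from rfl, smul_eq_mul]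

/-- The abstract positional exchange identity. -/
theorem exchN (hkm : k ≤ m) (u : ℕ → Fin m → ℝ) :
    Matrix.detRowAlternating (fun p : Fin m => u (p : ℕ)) *
      Matrix.detRowAlternating (fun q : Fin m => w (q : ℕ)) =
    ∑ S ∈ (range m).powersetCard k,
      Matrix.detRowAlternating (fun p : Fin m =>
        if (p : ℕ) ∈ S then w ((S.filter (· < (p : ℕ))).card) else u (p : ℕ)) *
      Matrix.detRowAlternating (fun q : Fin m =>
        if (q : ℕ) < k then u ((S.sort (· ≤ ·)).getD (q : ℕ) 0) else w (q : ℕ)) := by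
  have h := PhiF_eq w hkm (fun p : Fin m => u (p : ℕ))
  rw [PhiF] at h
  rw [mul_comm, ← h]
  apply Finset.sum_congr rfl
  intro S hS
  obtain ⟨hS1, hS2⟩ := Finset.mem_powersetCard.1 hS
  rw [termD]
  have hplug : plugD m w S (fun p : Fin m => u (p : ℕ)) =
      fun p : Fin m =>
        if (p : ℕ) ∈ S then w ((S.filter (· < (p : ℕ))).card) else u (p : ℕ) := by
    funext p
    simp only [plugD, rnk]
  have hfront : frontD m k w S (fun p : Fin m => u (p : ℕ)) =
      fun q : Fin m => if (q : ℕ) < k then u ((S.sort (· ≤ ·)).getD (q : ℕ) 0) else w (q : ℕ) := by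
    funext q
    by_cases hq : (q : ℕ) < k
    · simp only [frontD, if_pos hq]
      rw [clm_coe m (sel_lt_m hS1 hS2 hq)]
    · simp only [frontD, if_neg hq]
  rw [hplug, hfront]

end Exch4
end Plk



namespace Plk
section Outer

variable {n : ℕ}

/-- the columns of `X`, as a function of a natural-number label. -/
def colF (n : ℕ) (X : Matrix (Fin (n-1)) (Fin (2*n)) ℝ) (x : ℕ) : Fin (n-1) → ℝ :=
  fun r => if h : x < 2*n then X r ⟨x, h⟩ else 0

/-- the square matrix whose `p`-th row is the `l.getD p 0`-th column of `X`. -/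
def rowsOf (n : ℕ) (X : Matrix (Fin (n-1)) (Fin (2*n)) ℝ) (l : List ℕ) :
    Fin (n-1) → Fin (n-1) → ℝ :=
  fun p => colF n X (l.getD (p : ℕ) 0)

lemma getD_lt_2n (hn : 0 < n) {l : List ℕ} (h2 : ∀ x ∈ l, x < 2*n) (j : ℕ) :
    l.getD j 0 < 2*n := by
  rcases Nat.lt_or_ge j l.length with hj | hj
  · apply h2
    rw [List.getD_eq_getElem l 0 hj]
    exact List.getElem_mem hj
  · rw [List.getD_eq_default l 0 hj]
    omega

lemma getD_mem {l : List ℕ} {j : ℕ} (hj : j < l.length) : l.getD j 0 ∈ l := by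
  rw [List.getD_eq_getElem l 0 hj]
  exact List.getElem_mem hj

section WithList

/-- the entries of `l` as elements of `Fin (2*n)`. -/
def eL (hn : 0 < n) (l : List ℕ) (h2 : ∀ x ∈ l, x < 2*n) (p : Fin (n-1)) : Fin (2*n) :=
  ⟨l.getD (p : ℕ) 0, getD_lt_2n hn h2 (p : ℕ)⟩

lemma eL_injective (hn : 0 < n) {l : List ℕ} (hnd : l.Nodup) (hlen : l.length = n-1)
    (h2 : ∀ x ∈ l, x < 2*n) : Function.Injective (eL hn l h2) := by
  intro p q hpq
  have hp : (p : ℕ) < l.length := by rw [hlen]; exact p.isLt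
  have hq : (q : ℕ) < l.length := by rw [hlen]; exact q.isLt
  have hval : l.getD (p : ℕ) 0 = l.getD (q : ℕ) 0 := congrArg Fin.val hpq
  rw [List.getD_eq_getElem l 0 hp, List.getD_eq_getElem l 0 hq] at hval
  have := (List.nodup_iff_injective_get.1 hnd)
    (show l.get ⟨(p : ℕ), hp⟩ = l.get ⟨(q : ℕ), hq⟩ by simpa using hval)
  apply Fin.ext
  simpa [Fin.ext_iff] using this

lemma image_eL (hn : 0 < n) {l : List ℕ} (hnd : l.Nodup) (hlen : l.length = n-1)
    (h2 : ∀ x ∈ l, x < 2*n) : Finset.image (eL hn l h2) Finset.univ = toFinF l := by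
  ext x
  simp only [Finset.mem_image, toFinF, Finset.mem_filter, Finset.mem_univ, true_and]
  constructor
  · rintro ⟨p, -, rfl⟩
    exact getD_mem (by rw [hlen]; exact p.isLt)
  · intro hx
    obtain ⟨i, hget⟩ := List.mem_iff_get.1 hx
    refine ⟨⟨(i : ℕ), by rw [← hlen]; exact i.isLt⟩, ?_⟩
    apply Fin.ext
    show l.getD ((i : ℕ)) 0 = (x : ℕ)
    rw [List.getD_eq_getElem l 0 i.isLt]
    simpa using hget

lemma card_toFinF (hn : 0 < n) {l : List ℕ} (hnd : l.Nodup) (hlen : l.length = n-1)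
    (h2 : ∀ x ∈ l, x < 2*n) : (toFinF (m := 2*n) l).card = n-1 := by
  rw [← image_eL hn hnd hlen h2,
    Finset.card_image_of_injective _ (eL_injective hn hnd hlen h2), Finset.card_univ,
    Fintype.card_fin]

lemma mem_toFinF_of {l : List ℕ} {x : Fin (2*n)} (hx : x ∈ toFinF (m := 2*n) l) : (x : ℕ) ∈ l := by
  simpa [toFinF] using hx

/-- relation between the row matrix of `l` and the minor on `toFinF l`. -/
lemma detR_rowsOf (hn : 0 < n) {l : List ℕ} (hnd : l.Nodup) (hlen : l.length = n-1)
    (h2 : ∀ x ∈ l, x < 2*n) (X : Matrix (Fin (n-1)) (Fin (2*n)) ℝ) :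
    Matrix.detRowAlternating (rowsOf n X l) =
      ((-1 : ℝ) ^ invNum l) * minorOn X (toFinF l) := by
  classical
  set F : Finset (Fin (2*n)) := toFinF l with hF
  have hFc : F.card = n-1 := card_toFinF hn hnd hlen h2
  have hmemF : ∀ p : Fin (n-1), eL hn l h2 p ∈ F := by
    intro p
    rw [hF, ← image_eL hn hnd hlen h2]
    exact Finset.mem_image_of_mem _ (Finset.mem_univ p)
  -- the sorting permutation
  have hbij : Function.Bijective
      (fun p : Fin (n-1) => (⟨rnk F (eL hn l h2 p), rnk_lt hFc (hmemF p)⟩ : Fin (n-1))) := by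
    apply (Finite.injective_iff_bijective).1
    intro p q hpq
    apply eL_injective hn hnd hlen h2
    exact rnk_injOn (hmemF p) (hmemF q) (by simpa [Fin.ext_iff] using hpq)
  set π : Equiv.Perm (Fin (n-1)) := Equiv.ofBijective _ hbij with hπ
  have hπval : ∀ p, π p = ⟨rnk F (eL hn l h2 p), rnk_lt hFc (hmemF p)⟩ := fun p => rfl
  have hkey : ∀ p, F.orderEmbOfFin hFc (π p) = eL hn l h2 p := by
    intro p
    rw [hπval]
    exact orderEmb_rnk hFc (hmemF p)
  -- rows are the sorted columns permuted by π
  have hrows : rowsOf n X l =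
      (Matrix.of fun p' r => X r (F.orderEmbOfFin hFc p')).submatrix (⇑π) id := by
    funext p r
    show rowsOf n X l p r = X r (F.orderEmbOfFin hFc (π p))
    rw [hkey p]
    show colF n X (l.getD (p : ℕ) 0) r = X r (eL hn l h2 p)
    rw [colF, dif_pos (getD_lt_2n hn h2 (p : ℕ))]
    rfl
  have hdet : Matrix.detRowAlternating (rowsOf n X l) =
      ((Equiv.Perm.sign π : ℤ) : ℝ) *
        Matrix.det (Matrix.of fun p' r => X r (F.orderEmbOfFin hFc p')) := by
    rw [show Matrix.detRowAlternating (rowsOf n X l) = Matrix.det (rowsOf n X l) from rfl,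
      hrows]
    exact Matrix.det_permute π _
  -- the sorted-columns determinant is the minor
  have hminor : Matrix.det (Matrix.of fun p' r => X r (F.orderEmbOfFin hFc p')) = minorOn X F := by
    rw [minorOn, dif_pos hFc]
    rw [← Matrix.det_transpose (X.submatrix id fun r => F.orderEmbOfFin hFc r)]
    rfl
  -- inversions
  have hinv : invP π = invNum l := by
    rw [invP, invNum]
    apply Finset.card_bij (fun pq _ => (((pq.1 : Fin (n-1)) : ℕ), ((pq.2 : Fin (n-1)) : ℕ)))
    · rintro ⟨p, q⟩ hpq
      simp only [Finset.mem_filter, Finset.mem_product, Finset.mem_univ, true_and] at hpq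
      obtain ⟨hlt, hinv⟩ := hpq
      simp only [Finset.mem_filter, Finset.mem_product, Finset.mem_range]
      refine ⟨⟨by rw [hlen]; exact p.isLt, by rw [hlen]; exact q.isLt⟩, hlt, ?_⟩
      -- π q < π p means rnk of eL q < rnk of eL p, i.e. eL q < eL p
      have h1 : rnk F (eL hn l h2 q) < rnk F (eL hn l h2 p) := by
        simpa [hπval, Fin.lt_def] using hinv
      have h2' : eL hn l h2 q < eL hn l h2 p := by
        rcases lt_trichotomy (eL hn l h2 q) (eL hn l h2 p) with h | h | h
        · exact h
        · rw [h] at h1; omega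
        · exact absurd h1 (by
            have := rnk_strictMonoOn (hmemF p) (hmemF q) h
            omega)
      simpa [eL, Fin.lt_def] using h2'
    · rintro ⟨p, q⟩ hp ⟨p', q'⟩ hq h
      simp only [Prod.mk.injEq] at h
      have h1 : p = p' := Fin.ext h.1
      have h2' : q = q' := Fin.ext h.2
      rw [h1, h2']
    · rintro ⟨p, q⟩ hpq
      simp only [Finset.mem_filter, Finset.mem_product, Finset.mem_range] at hpq
      obtain ⟨⟨hp, hq⟩, hlt, hval⟩ := hpq
      have hp' : p < n-1 := by omega
      have hq' : q < n-1 := by omega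
      refine ⟨(⟨p, hp'⟩, ⟨q, hq'⟩), ?_, rfl⟩
      simp only [Finset.mem_filter, Finset.mem_product, Finset.mem_univ, true_and]
      refine ⟨by simpa [Fin.lt_def] using hlt, ?_⟩
      -- getD q < getD p means eL q < eL p means rnk <
      have hel : eL hn l h2 ⟨q, hq'⟩ < eL hn l h2 ⟨p, hp'⟩ := by
        simpa [eL, Fin.lt_def] using hval
      have := rnk_strictMonoOn (hmemF ⟨q, hq'⟩) (hmemF ⟨p, hp'⟩) hel
      simpa [hπval, Fin.lt_def] using this
  rw [hdet, hminor, sign_cast_eq_neg_one_pow, hinv]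

end WithList

lemma detR_rowsOf_dup (hn : 0 < n) {l : List ℕ} (hlen : l.length = n-1) (hnd : ¬ l.Nodup)
    (X : Matrix (Fin (n-1)) (Fin (2*n)) ℝ) :
    Matrix.detRowAlternating (rowsOf n X l) = 0 := by
  rw [List.nodup_iff_injective_get] at hnd
  obtain ⟨i, j, hget, hij⟩ := Function.not_injective_iff.1 hnd
  have hi : ((i : ℕ)) < n-1 := by rw [← hlen]; exact i.isLt
  have hj : ((j : ℕ)) < n-1 := by rw [← hlen]; exact j.isLt
  have hne : (⟨(i : ℕ), hi⟩ : Fin (n-1)) ≠ ⟨(j : ℕ), hj⟩ := by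
    intro hc
    exact hij (Fin.ext (by simpa [Fin.ext_iff] using hc))
  apply AlternatingMap.map_eq_zero_of_eq _ _ _ hne
  have hval : l.getD ((i : ℕ)) 0 = l.getD ((j : ℕ)) 0 := by
    rw [List.getD_eq_getElem l 0 i.isLt, List.getD_eq_getElem l 0 j.isLt]
    simpa using hget
  show colF n X (l.getD ((i : ℕ)) 0) = colF n X (l.getD ((j : ℕ)) 0)
  rw [hval]

end Outer
end Plk


namespace Plk
section Outer2

variable {n : ℕ}

lemma pairSum_eq (hn : 0 < n) (L : NCP n → ℝ) (X : Matrix (Fin (n-1)) (Fin (2*n)) ℝ)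
    (hL : ∀ I : Finset (Fin (2*n)), I.card = n-1 → minorOn X I = ∑ᶠ σ ∈ ESet I, L σ)
    {l l' : List ℕ} (hnd : l.Nodup) (hlen : l.length = n-1) (h2 : ∀ x ∈ l, x < 2*n)
    (hnd' : l'.Nodup) (hlen' : l'.length = n-1) (h2' : ∀ x ∈ l', x < 2*n) :
    pairSum L l l' = minorOn X (toFinF l) * minorOn X (toFinF l') := by
  rw [pairSum, if_pos ⟨⟨hnd, h2⟩, ⟨hnd', h2'⟩⟩]
  have hf1 : (ESet (n := n) (toFinF l)).Finite := Set.toFinite _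
  have hf2 : (ESet (n := n) (toFinF l')).Finite := Set.toFinite _
  have step1 : ∑ᶠ σ ∈ ESet (n := n) (toFinF l), ∑ᶠ κ ∈ ESet (n := n) (toFinF l'), L σ * L κ
      = ∑ σ ∈ hf1.toFinset, ∑ κ ∈ hf2.toFinset, L σ * L κ := by
    rw [finsum_mem_eq_finite_toFinset_sum _ hf1]
    apply Finset.sum_congr rfl
    intro σ _
    rw [finsum_mem_eq_finite_toFinset_sum _ hf2]
  rw [step1, hL _ (card_toFinF hn hnd hlen h2), hL _ (card_toFinF hn hnd' hlen' h2'),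
    finsum_mem_eq_finite_toFinset_sum _ hf1, finsum_mem_eq_finite_toFinset_sum _ hf2,
    Finset.sum_mul_sum]

lemma pairSum_not (L : NCP n → ℝ) {l l' : List ℕ}
    (h : ¬ ((l.Nodup ∧ ∀ x ∈ l, x < 2*n) ∧ (l'.Nodup ∧ ∀ x ∈ l', x < 2*n))) :
    pairSum L l l' = 0 := by
  rw [pairSum, if_neg h]

lemma getD_map_range (f : ℕ → ℕ) {M p : ℕ} (hp : p < M) :
    ((List.range M).map f).getD p 0 = f p := by
  rw [List.getD_eq_getElem _ 0 (by simpa using hp)]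
  simp

lemma swapI_length (LI LJ : List ℕ) (S : Finset ℕ) : (swapI LI LJ S).length = LI.length := by
  simp [swapI]

lemma swapJ_length (LI LJ : List ℕ) (S : Finset ℕ) : (swapJ LI LJ S).length = LJ.length := by
  simp [swapJ]

lemma swapI_getD (LI LJ : List ℕ) (S : Finset ℕ) {p : ℕ} (hp : p < LI.length) :
    (swapI LI LJ S).getD p 0 =
      if p ∈ S then LJ.getD ((S.filter (· < p)).card) 0 else LI.getD p 0 := by
  rw [swapI, getD_map_range _ hp]

lemma swapJ_getD (LI LJ : List ℕ) (S : Finset ℕ) {p : ℕ} (hp : p < LJ.length) :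
    (swapJ LI LJ S).getD p 0 =
      if p < S.card then LI.getD ((S.sort (· ≤ ·)).getD p 0) 0 else LJ.getD p 0 := by
  rw [swapJ, getD_map_range _ hp]

lemma swapI_lt2n (hn : 0 < n) {LI LJ : List ℕ} (hLI : ∀ x ∈ LI, x < 2*n)
    (hLJ : ∀ x ∈ LJ, x < 2*n) (S : Finset ℕ) : ∀ x ∈ swapI LI LJ S, x < 2*n := by
  intro x hx
  rw [swapI] at hx
  obtain ⟨p, hp, rfl⟩ := List.mem_map.1 hx
  split_ifs
  · exact getD_lt_2n hn hLJ _
  · exact getD_lt_2n hn hLI _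

lemma swapJ_lt2n (hn : 0 < n) {LI LJ : List ℕ} (hLI : ∀ x ∈ LI, x < 2*n)
    (hLJ : ∀ x ∈ LJ, x < 2*n) (S : Finset ℕ) : ∀ x ∈ swapJ LI LJ S, x < 2*n := by
  intro x hx
  rw [swapJ] at hx
  obtain ⟨p, hp, rfl⟩ := List.mem_map.1 hx
  split_ifs
  · exact getD_lt_2n hn hLI _
  · exact getD_lt_2n hn hLJ _

lemma sortedL_nodup (I : Finset (Fin (2*n))) : (sortedL I).Nodup :=
  (Finset.sort_nodup I _).map Fin.val_injective

lemma sortedL_length (I : Finset (Fin (2*n))) : (sortedL I).length = I.card := by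
  simp [sortedL, Finset.length_sort]

lemma sortedL_lt (I : Finset (Fin (2*n))) : ∀ x ∈ sortedL I, x < 2*n := by
  intro x hx
  obtain ⟨y, -, rfl⟩ := List.mem_map.1 hx
  exact y.isLt

lemma toFinF_sortedL (I : Finset (Fin (2*n))) : toFinF (sortedL I) = I := by
  ext x
  simp only [toFinF, Finset.mem_filter, Finset.mem_univ, true_and, sortedL, List.mem_map]
  constructor
  · rintro ⟨y, hy, hval⟩
    rwa [← Fin.val_injective hval, ← Finset.mem_sort (α := Fin (2*n)) (· ≤ ·)]
  · intro hx
    exact ⟨x, (Finset.mem_sort (α := Fin (2*n)) (· ≤ ·)).2 hx, rfl⟩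

lemma sortedL_sorted (I : Finset (Fin (2*n))) : (sortedL I).Pairwise (· < ·) := by
  apply List.Pairwise.map
  · intro a b hab
    exact hab
  · exact (Finset.sortedLT_sort I).pairwise

lemma invNum_sortedL (I : Finset (Fin (2*n))) : invNum (sortedL I) = 0 := by
  rw [invNum, Finset.card_eq_zero, Finset.filter_eq_empty_iff]
  rintro ⟨p, q⟩ hpq
  simp only [Finset.mem_product, Finset.mem_range] at hpq
  rintro ⟨hlt, hinv⟩
  have hs := sortedL_sorted I
  have hmono := List.pairwise_iff_get.1 hs ⟨p, hpq.1⟩ ⟨q, hpq.2⟩ (by simpa [Fin.lt_def] using hlt)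
  rw [List.getD_eq_getElem _ 0 hpq.2, List.getD_eq_getElem _ 0 hpq.1] at hinv
  simp only [List.get_eq_getElem] at hmono
  omega

end Outer2
end Plk

theorem stmt19 (n : ℕ) (X : Matrix (Fin (n-1)) (Fin (2*n)) ℝ) (L : NCP n → ℝ)
    (hL : ∀ I : Finset (Fin (2*n)), I.card = n-1 → minorOn X I = ∑ᶠ σ ∈ ESet I, L σ)
    (k : ℕ) (hk1 : 1 ≤ k) (hk2 : k < n - 1)
    (I J : Finset (Fin (2*n))) (hI : I.card = n-1) (hJ : J.card = n-1) :
    pairSum L (sortedL I) (sortedL J) =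
      ∑ S ∈ (Finset.range (n-1)).powersetCard k,
        (-1 : ℝ) ^ (invNum (swapI (sortedL I) (sortedL J) S) +
                    invNum (swapJ (sortedL I) (sortedL J) S)) *
          pairSum L (swapI (sortedL I) (sortedL J) S) (swapJ (sortedL I) (sortedL J) S) := by
  classical
  have hn0 : 0 < n := by omega
  haveI : NeZero (n-1) := ⟨by omega⟩
  haveI : NeZero k := ⟨by omega⟩
  have hkm : k ≤ n-1 := le_of_lt hk2
  have hndI : (sortedL I).Nodup := Plk.sortedL_nodup I
  have hlenI : (sortedL I).length = n-1 := by rw [Plk.sortedL_length, hI]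
  have h2I : ∀ x ∈ sortedL I, x < 2*n := Plk.sortedL_lt I
  have hndJ : (sortedL J).Nodup := Plk.sortedL_nodup J
  have hlenJ : (sortedL J).length = n-1 := by rw [Plk.sortedL_length, hJ]
  have h2J : ∀ x ∈ sortedL J, x < 2*n := Plk.sortedL_lt J
  set uN : ℕ → Fin (n-1) → ℝ := fun x => Plk.colF n X ((sortedL I).getD x 0) with huN
  set wN : ℕ → Fin (n-1) → ℝ := fun x => Plk.colF n X ((sortedL J).getD x 0) with hwN
  have hLHS : pairSum L (sortedL I) (sortedL J) =
      Matrix.detRowAlternating (Plk.rowsOf n X (sortedL I)) *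
        Matrix.detRowAlternating (Plk.rowsOf n X (sortedL J)) := by
    rw [Plk.pairSum_eq hn0 L X hL hndI hlenI h2I hndJ hlenJ h2J,
      Plk.detR_rowsOf hn0 hndI hlenI h2I X, Plk.detR_rowsOf hn0 hndJ hlenJ h2J X,
      Plk.invNum_sortedL, Plk.invNum_sortedL, pow_zero, one_mul, one_mul]
  have hexch :
      Matrix.detRowAlternating (Plk.rowsOf n X (sortedL I)) *
        Matrix.detRowAlternating (Plk.rowsOf n X (sortedL J)) =
      ∑ S ∈ (Finset.range (n-1)).powersetCard k,
        Matrix.detRowAlternating (fun p : Fin (n-1) =>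
          if (p : ℕ) ∈ S then wN ((S.filter (· < (p : ℕ))).card) else uN (p : ℕ)) *
        Matrix.detRowAlternating (fun q : Fin (n-1) =>
          if (q : ℕ) < k then uN ((S.sort (· ≤ ·)).getD (q : ℕ) 0) else wN (q : ℕ)) :=
    Plk.exchN wN hkm uN
  rw [hLHS, hexch]
  apply Finset.sum_congr rfl
  intro S hS
  obtain ⟨hS1, hS2⟩ := Finset.mem_powersetCard.1 hS
  have hlen1 : (swapI (sortedL I) (sortedL J) S).length = n-1 := by
    rw [Plk.swapI_length, hlenI]
  have hlen2 : (swapJ (sortedL I) (sortedL J) S).length = n-1 := by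
    rw [Plk.swapJ_length, hlenJ]
  have h21 : ∀ x ∈ swapI (sortedL I) (sortedL J) S, x < 2*n := Plk.swapI_lt2n hn0 h2I h2J S
  have h22 : ∀ x ∈ swapJ (sortedL I) (sortedL J) S, x < 2*n := Plk.swapJ_lt2n hn0 h2I h2J S
  have hrows1 : (fun p : Fin (n-1) =>
      if (p : ℕ) ∈ S then wN ((S.filter (· < (p : ℕ))).card) else uN (p : ℕ)) =
      Plk.rowsOf n X (swapI (sortedL I) (sortedL J) S) := by
    funext p
    show _ = Plk.colF n X ((swapI (sortedL I) (sortedL J) S).getD (p : ℕ) 0)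
    rw [Plk.swapI_getD _ _ _ (by rw [hlenI]; exact p.isLt)]
    split_ifs with h
    · rfl
    · rfl
  have hrows2 : (fun q : Fin (n-1) =>
      if (q : ℕ) < k then uN ((S.sort (· ≤ ·)).getD (q : ℕ) 0) else wN (q : ℕ)) =
      Plk.rowsOf n X (swapJ (sortedL I) (sortedL J) S) := by
    funext q
    show _ = Plk.colF n X ((swapJ (sortedL I) (sortedL J) S).getD (q : ℕ) 0)
    rw [Plk.swapJ_getD _ _ _ (by rw [hlenJ]; exact q.isLt), hS2]
    split_ifs with h
    · rfl
    · rfl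
  rw [hrows1, hrows2]
  by_cases hnd1 : (swapI (sortedL I) (sortedL J) S).Nodup
  · by_cases hnd2 : (swapJ (sortedL I) (sortedL J) S).Nodup
    · rw [Plk.pairSum_eq hn0 L X hL hnd1 hlen1 h21 hnd2 hlen2 h22,
        Plk.detR_rowsOf hn0 hnd1 hlen1 h21 X, Plk.detR_rowsOf hn0 hnd2 hlen2 h22 X,
        pow_add]
      ring
    · rw [Plk.pairSum_not L (fun hc => hnd2 hc.2.1),
        Plk.detR_rowsOf_dup hn0 hlen2 hnd2 X]
      ring
  · rw [Plk.pairSum_not L (fun hc => hnd1 hc.1.1),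
      Plk.detR_rowsOf_dup hn0 hlen1 hnd1 X]
    ring

end
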